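/- arXiv:2509.18120 — 9 statements merged into one kernel-verified Lean document; each statement's English description precedes it below -/
import Mathlib

section
/- Define the potential function F(d) = ε(d) − Σ_{i<N} (c_i/z_i)·d_i, where z_i = Σ_{j≠i} γ_{i,j}·(ξ − φ_j) − ψ_i. Then the data-generation game is an exact weighted potential game with weights z_i and potential F: for every organization i and every two strategy profiles d, d' ∈ ℝ^N that agree in every coordinate except possibly the i-th, U_i(d) − U_i(d') = z_i·(F(d) − F(d')). -/
open Real Finset

/-- Global model error: `ε(d) = exp(((1/N)·Σ_j (α·(L_j + d_j)^(−β) − δ) − 1)/ϱ)`. -/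
noncomputable def epsGlob (N : ℕ) (α β δ ϱ : ℝ) (L d : Fin N → ℝ) : ℝ :=
  Real.exp (((1 / (N : ℝ)) * ∑ j, (α * (L j + d j) ^ (-β) - δ) - 1) / ϱ)

/-- The weight `z_i = Σ_{j≠i} γ_{i,j}·(ξ − φ_j) − ψ_i`. -/
noncomputable def zWeight (N : ℕ) (ψ φ : Fin N → ℝ) (γ : Fin N → Fin N → ℝ) (ξ : ℝ)
    (i : Fin N) : ℝ :=
  (∑ j ∈ Finset.univ.erase i, γ i j * (ξ - φ j)) - ψ i

/-- Organization `i`'s utility: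
`U_i(d) = ψ_i·(ε_0 − ε(d)) + Σ_{j≠i} (ξ − φ_j)·γ_{i,j}·Δ_i(d) − c_i·d_i − K_i`,
where `Δ_i(d) = ε(d) − ε(d with i-th coordinate 0)`. -/
noncomputable def utility (N : ℕ) (α β δ ϱ : ℝ) (L c ψ φ K : Fin N → ℝ)
    (γ : Fin N → Fin N → ℝ) (ξ ε0 : ℝ) (i : Fin N) (d : Fin N → ℝ) : ℝ :=
  ψ i * (ε0 - epsGlob N α β δ ϱ L d)
    + ∑ j ∈ Finset.univ.erase i, (ξ - φ j) * γ i j *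
        (epsGlob N α β δ ϱ L d - epsGlob N α β δ ϱ L (Function.update d i 0))
    - c i * d i - K i

/-- The potential function `F(d) = ε(d) − Σ_i (c_i/z_i)·d_i`. -/
noncomputable def potential (N : ℕ) (α β δ ϱ : ℝ) (L c z : Fin N → ℝ)
    (d : Fin N → ℝ) : ℝ :=
  epsGlob N α β δ ϱ L d - ∑ i, (c i / z i) * d i

/-- The game is an exact weighted potential game with weights `z_i`
and potential `F(d) = ε(d) − Σ_i (c_i/z_i)·d_i`:
`U_i(d) − U_i(d') = z_i·(F(d) − F(d'))` for unilateral deviations of `i`. -/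
theorem weighted_potential_game (N : ℕ) (hN : 1 ≤ N) (α β δ ϱ : ℝ) (hα : 0 < α) (hβ : 0 < β)
    (hϱ : 0 < ϱ) (hδ : 0 ≤ δ) (L c ψ φ K : Fin N → ℝ)
    (hL : ∀ i, 0 < L i) (hc : ∀ i, 0 < c i) (hψ : ∀ i, 0 < ψ i) (hφ : ∀ j, 0 < φ j)
    (hK : ∀ i, 0 ≤ K i)
    (γ : Fin N → Fin N → ℝ) (hγ : ∀ i j, γ i j ∈ Set.Icc (0 : ℝ) 1)
    (ξ : ℝ) (hξ0 : 0 ≤ ξ) (hξ : ∀ j, ξ ≤ φ j) (ε0 : ℝ) 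
    (hz : ∀ i, zWeight N ψ φ γ ξ i ≠ 0)
    (i : Fin N) (d d' : Fin N → ℝ) (hd : ∀ j, 0 ≤ d j) (hd' : ∀ j, 0 ≤ d' j)
    (hagree : ∀ j, j ≠ i → d j = d' j) :
    utility N α β δ ϱ L c ψ φ K γ ξ ε0 i d - utility N α β δ ϱ L c ψ φ K γ ξ ε0 i d'
      = zWeight N ψ φ γ ξ i *
          (potential N α β δ ϱ L c (zWeight N ψ φ γ ξ) d
            - potential N α β δ ϱ L c (zWeight N ψ φ γ ξ) d') := by
  set z := zWeight N ψ φ γ ξ with hzdef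
  set E := epsGlob N α β δ ϱ L with hE
  have hupd : Function.update d i 0 = Function.update d' i 0 := by
    funext j
    rcases eq_or_ne j i with rfl | hji
    · simp
    · simp [Function.update_of_ne hji, hagree j hji]
  have hsum : (∑ j, (c j / z j) * d j) - (∑ j, (c j / z j) * d' j)
      = (c i / z i) * (d i - d' i) := by
    rw [← Finset.sum_sub_distrib]
    rw [Finset.sum_eq_single i]
    · ring
    · intro j _ hji
      rw [hagree j hji]; ring
    · simp
  have hsum2 : z i * ((∑ j, (c j / z j) * d j) - (∑ j, (c j / z j) * d' j))
      = c i * (d i - d' i) := by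
    rw [hsum, ← mul_assoc, mul_comm (z i), div_mul_cancel₀ _ (hz i)]
  have hS : ∀ e : Fin N → ℝ,
      (∑ j ∈ Finset.univ.erase i, (ξ - φ j) * γ i j * (E e - E (Function.update e i 0)))
        = (∑ j ∈ Finset.univ.erase i, γ i j * (ξ - φ j)) * (E e - E (Function.update e i 0)) := by
    intro e
    rw [Finset.sum_mul]
    apply Finset.sum_congr rfl
    intro j _; ring
  have hzi : z i = (∑ j ∈ Finset.univ.erase i, γ i j * (ξ - φ j)) - ψ i := rfl
  simp only [utility, potential, hE.symm, hzdef.symm]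
  rw [hS d, hS d', hupd, hzi]
  linear_combination hsum2 - hzi * ((∑ j, (c j / z j) * d j) - (∑ j, (c j / z j) * d' j))
end

section
/- The potential function F(d) = ε(d) − Σ_{i<N} (c_i/z_i)·d_i is strictly convex on the box ∏_{i<N} [m, M] ⊂ ℝ^N, where 0 ≤ m < M. -/
open Real Finset

lemma shift_rpow_strictConvexOn (ℓ m M β : ℝ) (hℓ : 0 < ℓ) (hm : 0 ≤ m) (hβ : 0 < β) :
    StrictConvexOn ℝ (Set.Icc m M) (fun t => (ℓ + t) ^ (-β)) := by
  have hderiv : ∀ t ∈ Set.Ioi (-ℓ),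
      HasDerivAt (fun t => (ℓ + t) ^ (-β)) (-β * (ℓ + t) ^ (-β - 1)) t := by
    intro t ht
    have h1 : HasDerivAt (fun t : ℝ => ℓ + t) 1 t := (hasDerivAt_id t).const_add ℓ
    have h2 := h1.rpow_const (p := -β) (Or.inl (by simp only [Set.mem_Ioi] at ht; linarith))
    simpa using h2
  apply strictConvexOn_of_deriv2_pos (convex_Icc m M)
  · exact ContinuousOn.rpow_const (by fun_prop) fun x hx => Or.inl (by nlinarith [hx.1])
  · intro x hx
    rw [interior_Icc] at hx
    have hx0 : 0 < ℓ + x := by nlinarith [hx.1]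
    have hxI : x ∈ Set.Ioi (-ℓ) := by simp; linarith
    have hEq : deriv (fun t => (ℓ + t) ^ (-β)) =ᶠ[nhds x]
        (fun t => -β * (ℓ + t) ^ (-β - 1)) := by
      filter_upwards [isOpen_Ioi.mem_nhds hxI] with t ht
      exact (hderiv t ht).deriv
    have hg : HasDerivAt (fun t => -β * (ℓ + t) ^ (-β - 1))
        (-β * (1 * (-β - 1) * (ℓ + x) ^ (-β - 1 - 1))) x := by
      have h1 : HasDerivAt (fun t : ℝ => ℓ + t) 1 x := (hasDerivAt_id x).const_add ℓ
      exact (h1.rpow_const (Or.inl (by linarith))).const_mul _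
    have : deriv^[2] (fun t => (ℓ + t) ^ (-β)) x
        = -β * (1 * (-β - 1) * (ℓ + x) ^ (-β - 1 - 1)) := by
      show deriv (deriv _) x = _
      rw [hEq.deriv_eq]
      exact hg.deriv
    rw [this]
    have : (0:ℝ) < (ℓ + x) ^ (-β - 1 - 1) := rpow_pos_of_pos hx0 _
    nlinarith [mul_pos hβ this, mul_pos (mul_pos hβ hβ) this]

/-- The potential `F(d) = ε(d) − Σ_i (c_i/z_i)·d_i` is strictly convex
on the box `∏_i [m, M]` with `0 ≤ m < M`. -/
theorem potential_strictConvexOn (N : ℕ) (hN : 1 ≤ N) (α β δ ϱ : ℝ) (hα : 0 < α) (hβ : 0 < β)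
    (hϱ : 0 < ϱ) (hδ : 0 ≤ δ) (L c z : Fin N → ℝ)
    (hL : ∀ i, 0 < L i) (hc : ∀ i, 0 < c i) (hz : ∀ i, z i ≠ 0)
    (m M : ℝ) (hm : 0 ≤ m) (hmM : m < M) :
    StrictConvexOn ℝ (Set.univ.pi fun _ : Fin N => Set.Icc m M)
      (potential N α β δ ϱ L c z) := by
  have hN0 : (0:ℝ) < (N:ℝ) := by exact_mod_cast hN
  constructor
  · exact convex_pi fun i _ => convex_Icc m M
  intro x hx y hy hxy a b ha hb hab
  have hxm : ∀ j, x j ∈ Set.Icc m M := fun j => hx j (Set.mem_univ j)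
  have hym : ∀ j, y j ∈ Set.Icc m M := fun j => hy j (Set.mem_univ j)
  have hφ : ∀ j, StrictConvexOn ℝ (Set.Icc m M) (fun t => (L j + t) ^ (-β)) :=
    fun j => shift_rpow_strictConvexOn (L j) m M β (hL j) hm hβ
  have hcoord : ∀ j, (a • x + b • y) j = a * x j + b * y j := by
    intro j; simp [smul_eq_mul]
  -- per-coordinate inequalities
  have hle : ∀ j, (L j + (a • x + b • y) j) ^ (-β)
      ≤ a * (L j + x j) ^ (-β) + b * (L j + y j) ^ (-β) := by
    intro j
    rw [hcoord j]
    rcases eq_or_ne (x j) (y j) with h | h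
    · have h1 : a * x j + b * y j = x j := by rw [← h]; linear_combination (x j) * hab
      rw [h1, ← h]
      have h2 : a * (L j + x j) ^ (-β) + b * (L j + x j) ^ (-β) = (L j + x j) ^ (-β) := by
        linear_combination ((L j + x j) ^ (-β)) * hab
      linarith
    · exact le_of_lt ((hφ j).2 (hxm j) (hym j) h ha hb hab)
  have hstrict : ∃ j, (L j + (a • x + b • y) j) ^ (-β)
      < a * (L j + x j) ^ (-β) + b * (L j + y j) ^ (-β) := by
    obtain ⟨j, hj⟩ : ∃ j, x j ≠ y j := by
      by_contra h; push_neg at h; exact hxy (funext h)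
    exact ⟨j, by rw [hcoord j]; exact (hφ j).2 (hxm j) (hym j) hj ha hb hab⟩
  -- sum inequality
  have hsum : ∑ j, (α * (L j + (a • x + b • y) j) ^ (-β) - δ)
      < a * ∑ j, (α * (L j + x j) ^ (-β) - δ) + b * ∑ j, (α * (L j + y j) ^ (-β) - δ) := by
    have : ∑ j, (α * (L j + (a • x + b • y) j) ^ (-β) - δ)
        < ∑ j, (a * (α * (L j + x j) ^ (-β) - δ) + b * (α * (L j + y j) ^ (-β) - δ)) := by
      apply Finset.sum_lt_sum
      · intro j _
        have := hle j
        nlinarith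
      · obtain ⟨j, hj⟩ := hstrict
        exact ⟨j, Finset.mem_univ j, by nlinarith⟩
    calc _ < _ := this
    _ = _ := by
        rw [Finset.mul_sum, Finset.mul_sum, ← Finset.sum_add_distrib]
  -- inner argument inequality
  set Sz := ∑ j, (α * (L j + (a • x + b • y) j) ^ (-β) - δ) with hSz
  set Sx := ∑ j, (α * (L j + x j) ^ (-β) - δ) with hSx
  set Sy := ∑ j, (α * (L j + y j) ^ (-β) - δ) with hSy
  have hinner : ((1 / (N:ℝ)) * Sz - 1) / ϱ
      < a * (((1 / (N:ℝ)) * Sx - 1) / ϱ) + b * (((1 / (N:ℝ)) * Sy - 1) / ϱ) := by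
    have h1 : (1 / (N:ℝ)) * Sz < (1 / (N:ℝ)) * (a * Sx + b * Sy) :=
      mul_lt_mul_of_pos_left hsum (by positivity)
    have h2 : a * (((1 / (N:ℝ)) * Sx - 1) / ϱ) + b * (((1 / (N:ℝ)) * Sy - 1) / ϱ)
        = ((1 / (N:ℝ)) * (a * Sx + b * Sy) - 1) / ϱ := by
      field_simp
      nlinarith [hab]
    rw [h2]
    apply div_lt_div_of_pos_right (by linarith) hϱ
  -- exp step
  have hexp : Real.exp (((1 / (N:ℝ)) * Sz - 1) / ϱ)
      < a * Real.exp (((1 / (N:ℝ)) * Sx - 1) / ϱ) + b * Real.exp (((1 / (N:ℝ)) * Sy - 1) / ϱ) := by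
    calc Real.exp (((1 / (N:ℝ)) * Sz - 1) / ϱ)
        < Real.exp (a * (((1 / (N:ℝ)) * Sx - 1) / ϱ) + b * (((1 / (N:ℝ)) * Sy - 1) / ϱ)) :=
          Real.exp_lt_exp.2 hinner
      _ ≤ _ := by
          have := convexOn_exp.2 (Set.mem_univ (((1 / (N:ℝ)) * Sx - 1) / ϱ))
            (Set.mem_univ (((1 / (N:ℝ)) * Sy - 1) / ϱ)) ha.le hb.le hab
          simpa [smul_eq_mul] using this
  -- linear part
  have hlin : ∑ i, (c i / z i) * (a • x + b • y) i
      = a * ∑ i, (c i / z i) * x i + b * ∑ i, (c i / z i) * y i := by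
    rw [Finset.mul_sum, Finset.mul_sum, ← Finset.sum_add_distrib]
    exact Finset.sum_congr rfl fun i _ => by rw [hcoord i]; ring
  simp only [potential, epsGlob, smul_eq_mul]
  rw [hlin]
  have hz' := hexp
  simp only [← hSz, ← hSx, ← hSy] at *
  linarith
end

section
/- The game possesses a pure-strategy Nash equilibrium: there exists a profile d* ∈ ∏_{i<N} [m, M] such that for every organization i and every deviation y ∈ [m, M], U_i(d* with its i-th coordinate replaced by y) ≤ U_i(d*). -/
open Real Finset

/-- Tangent-line inequality for `t ↦ t ^ (-p)` on positives (convexity). -/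
lemma rpow_neg_tangent {p : ℝ} (hp : 0 < p) {a b : ℝ} (ha : 0 < a) (hb : 0 < b) :
    a ^ (-p) + (-p) * a ^ (-p - 1) * (b - a) ≤ b ^ (-p) := by
  set C : ℝ := p * a ^ (-p - 1) with hC
  have hCpos : 0 < C := by positivity
  set F : ℝ → ℝ := fun t => t ^ (-p) + C * t with hF
  have hderiv : ∀ t : ℝ, 0 < t → HasDerivAt F (-p * t ^ (-p - 1) + C) t := by
    intro t ht
    have h1 : HasDerivAt (fun x : ℝ => x ^ (-p)) (-p * t ^ (-p - 1)) t :=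
      Real.hasDerivAt_rpow_const (Or.inl ht.ne')
    have h2 : HasDerivAt (fun x : ℝ => C * x) (C * 1) t := (hasDerivAt_id t).const_mul C
    have h2' : HasDerivAt (fun x : ℝ => C * x) C t := by simpa using h2
    exact h1.add h2'
  have key : F a ≤ F b := by
    rcases le_total a b with hab | hab
    · have hmono : MonotoneOn F (Set.Icc a b) := by
        apply monotoneOn_of_deriv_nonneg (convex_Icc a b)
        · intro t ht
          exact (hderiv t (lt_of_lt_of_le ha ht.1)).continuousAt.continuousWithinAt
        · intro t ht
          rw [interior_Icc] at ht
          exact (hderiv t (ha.trans ht.1)).differentiableAt.differentiableWithinAt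
        · intro t ht
          rw [interior_Icc] at ht
          rw [(hderiv t (ha.trans ht.1)).deriv]
          have : t ^ (-p - 1) ≤ a ^ (-p - 1) :=
            Real.rpow_le_rpow_of_nonpos ha ht.1.le (by linarith)
          nlinarith
      exact hmono (Set.left_mem_Icc.2 hab) (Set.right_mem_Icc.2 hab) hab
    · have hanti : AntitoneOn F (Set.Icc b a) := by
        apply antitoneOn_of_deriv_nonpos (convex_Icc b a)
        · intro t ht
          exact (hderiv t (lt_of_lt_of_le hb ht.1)).continuousAt.continuousWithinAt
        · intro t ht
          rw [interior_Icc] at ht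
          exact (hderiv t (hb.trans ht.1)).differentiableAt.differentiableWithinAt
        · intro t ht
          rw [interior_Icc] at ht
          rw [(hderiv t (hb.trans ht.1)).deriv]
          have : a ^ (-p - 1) ≤ t ^ (-p - 1) :=
            Real.rpow_le_rpow_of_nonpos (hb.trans ht.1) ht.2.le (by linarith)
          nlinarith
      exact hanti (Set.left_mem_Icc.2 hab) (Set.right_mem_Icc.2 hab) hab
  simp only [hF] at key
  nlinarith [key]

/-- Tangent-line inequality for `exp`. -/
lemma exp_tangent (a b : ℝ) : Real.exp b * (a - b) + Real.exp b ≤ Real.exp a := by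
  have h1 : Real.exp a = Real.exp b * Real.exp (a - b) := by
    rw [← Real.exp_add]; ring_nf
  nlinarith [Real.add_one_le_exp (a - b), Real.exp_pos b]

lemma sum_update_eq {N : ℕ} (g : Fin N → ℝ → ℝ) (d : Fin N → ℝ) (i : Fin N) (t : ℝ) :
    ∑ j, g j (Function.update d i t j)
      = g i t + ∑ j ∈ Finset.univ.erase i, g j (d j) := by
  rw [← Finset.add_sum_erase _ (fun j => g j (Function.update d i t j)) (Finset.mem_univ i)]
  simp only [Function.update_self]
  congr 1
  exact Finset.sum_congr rfl fun j hj => by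
    rw [Function.update_of_ne (Finset.ne_of_mem_erase hj)]

lemma epsGlob_anti {N : ℕ} {α β δ ϱ : ℝ} (hα : 0 < α) (hβ : 0 < β) (hϱ : 0 < ϱ)
    {L d d' : Fin N → ℝ} (hpos : ∀ j, 0 < L j + d j) (hle : ∀ j, d j ≤ d' j) :
    epsGlob N α β δ ϱ L d' ≤ epsGlob N α β δ ϱ L d := by
  unfold epsGlob
  apply Real.exp_le_exp.mpr
  have hsum : ∑ j, (α * (L j + d' j) ^ (-β) - δ) ≤ ∑ j, (α * (L j + d j) ^ (-β) - δ) := by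
    apply Finset.sum_le_sum
    intro j _
    have h1 : (L j + d' j) ^ (-β) ≤ (L j + d j) ^ (-β) :=
      Real.rpow_le_rpow_of_nonpos (hpos j) (by linarith [hle j]) (by linarith)
    nlinarith
  have h2 : (1 / (N : ℝ)) * ∑ j, (α * (L j + d' j) ^ (-β) - δ)
      ≤ (1 / (N : ℝ)) * ∑ j, (α * (L j + d j) ^ (-β) - δ) :=
    mul_le_mul_of_nonneg_left hsum (by positivity)
  apply div_le_div_of_nonneg_right ?_ hϱ.le
  linarith


set_option maxHeartbeats 1000000 in
/-- The game possesses a pure-strategy Nash equilibrium on the box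
`∏_i [m, M]`. -/
theorem exists_nash_equilibrium (N : ℕ) (hN : 1 ≤ N) (α β δ ϱ : ℝ) (hα : 0 < α) (hβ : 0 < β)
    (hϱ : 0 < ϱ) (hδ : 0 ≤ δ) (L c ψ φ K : Fin N → ℝ)
    (hL : ∀ i, 0 < L i) (hc : ∀ i, 0 < c i) (hψ : ∀ i, 0 < ψ i) (hφ : ∀ j, 0 < φ j)
    (hK : ∀ i, 0 ≤ K i)
    (γ : Fin N → Fin N → ℝ) (hγ : ∀ i j, γ i j ∈ Set.Icc (0 : ℝ) 1)
    (ξ : ℝ) (hξ0 : 0 ≤ ξ) (hξ : ∀ j, ξ ≤ φ j) (ε0 : ℝ) 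
    (m M : ℝ) (hm : 0 ≤ m) (hmM : m < M) :
    ∃ dstar : Fin N → ℝ, (∀ i, dstar i ∈ Set.Icc m M) ∧
      ∀ i : Fin N, ∀ y ∈ Set.Icc m M,
        utility N α β δ ϱ L c ψ φ K γ ξ ε0 i (Function.update dstar i y)
          ≤ utility N α β δ ϱ L c ψ φ K γ ξ ε0 i dstar := by
  have hn : (0:ℝ) < (N:ℝ) := Nat.cast_pos.mpr hN
  -- effective marginal-value coefficient for each player
  set P : Fin N → ℝ := fun i => ψ i - ∑ j ∈ Finset.univ.erase i, (ξ - φ j) * γ i j with hPdef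
  have hP : ∀ i, 0 < P i := by
    intro i
    have hs : ∑ j ∈ Finset.univ.erase i, (ξ - φ j) * γ i j ≤ 0 := by
      apply Finset.sum_nonpos
      intro j _
      nlinarith [(hγ i j).1, hξ j]
    have h1 := hψ i
    simp only [hPdef]
    linarith
  -- candidate best response as a function of the aggregate error level
  set q : Fin N → ℝ → ℝ :=
    fun i t => (P i * t * α * β / (c i * ((N:ℝ) * ϱ))) ^ (1/(β+1)) with hqdef
  set ρ : Fin N → ℝ → ℝ := fun i t => max m (min M (q i t - L i)) with hρdef
  have hρm : ∀ i t, m ≤ ρ i t := by intro i t; rw [hρdef]; exact le_max_left _ _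
  have hρM : ∀ i t, ρ i t ≤ M := by
    intro i t; rw [hρdef]; exact max_le hmM.le (min_le_left _ _)
  -- continuity of the aggregate map
  have hρcont : ∀ i, Continuous (ρ i) := by
    intro i
    rw [hρdef]
    apply continuous_const.max
    apply continuous_const.min
    apply Continuous.sub ?_ continuous_const
    rw [hqdef]
    apply Continuous.rpow_const
    · exact (((continuous_const.mul continuous_id).mul continuous_const).mul
        continuous_const).div_const _
    · intro x; right; positivity
  have hGcont : Continuous (fun t => epsGlob N α β δ ϱ L (fun j => ρ j t) - t) := by
    apply Continuous.sub ?_ continuous_id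
    unfold epsGlob
    apply Real.continuous_exp.comp
    apply Continuous.div_const
    apply Continuous.sub ?_ continuous_const
    apply continuous_const.mul
    apply continuous_finset_sum
    intro j _
    apply Continuous.sub ?_ continuous_const
    apply continuous_const.mul
    apply Continuous.rpow_const (continuous_const.add (hρcont j))
    intro t
    exact Or.inl (ne_of_gt (by have := hρm j t; have := hL j; show 0 < L j + ρ j t; linarith))
  -- bounds for the aggregate map
  set elo := epsGlob N α β δ ϱ L (fun _ => M) with helo
  set ehi := epsGlob N α β δ ϱ L (fun _ => m) with hehi
  have hlo : ∀ t, elo ≤ epsGlob N α β δ ϱ L (fun j => ρ j t) := by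
    intro t
    rw [helo]
    exact epsGlob_anti hα hβ hϱ (fun j => by have := hρm j t; have := hL j; linarith)
      (fun j => hρM j t)
  have hhi : ∀ t, epsGlob N α β δ ϱ L (fun j => ρ j t) ≤ ehi := by
    intro t
    rw [hehi]
    exact epsGlob_anti hα hβ hϱ (fun j => by have := hL j; linarith) (fun j => hρm j t)
  have hlohi : elo ≤ ehi := by
    rw [helo, hehi]
    exact epsGlob_anti hα hβ hϱ (fun j => by have := hL j; linarith) (fun _ => hmM.le)
  -- fixed point of the aggregate map by the intermediate value theorem
  have h0mem : (0:ℝ) ∈ Set.Icc ((fun t => epsGlob N α β δ ϱ L (fun j => ρ j t) - t) ehi)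
      ((fun t => epsGlob N α β δ ϱ L (fun j => ρ j t) - t) elo) := by
    constructor
    · show (fun t => epsGlob N α β δ ϱ L (fun j => ρ j t) - t) ehi ≤ 0
      simp only
      linarith [hhi ehi]
    · show 0 ≤ (fun t => epsGlob N α β δ ϱ L (fun j => ρ j t) - t) elo
      simp only
      linarith [hlo elo]
  obtain ⟨e, heIcc, hGe⟩ := intermediate_value_Icc' hlohi hGcont.continuousOn h0mem
  simp only at hGe
  have helopos : 0 < elo := by rw [helo]; exact Real.exp_pos _
  have hepos : 0 < e := lt_of_lt_of_le helopos heIcc.1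
  -- the equilibrium profile
  refine ⟨fun j => ρ j e, fun j => ⟨hρm j e, hρM j e⟩, ?_⟩
  intro i y hy
  obtain ⟨hym, hyM⟩ := hy
  set d : Fin N → ℝ := fun j => ρ j e with hd
  have hfix : epsGlob N α β δ ϱ L d = e := by rw [hd]; linarith [hGe]
  have hxm : m ≤ d i := hρm i e
  have hxM : d i ≤ M := hρM i e
  have hLx : 0 < L i + d i := by linarith [hL i]
  have hLy : 0 < L i + y := by linarith [hL i]
  have hPi := hP i
  have hci := hc i
  -- rewrite both utilities
  unfold utility
  simp only [Function.update_idem, Function.update_self]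
  rw [← Finset.sum_mul, ← Finset.sum_mul]
  set A := ∑ j ∈ Finset.univ.erase i, (ξ - φ j) * γ i j with hA
  set Ey := epsGlob N α β δ ϱ L (Function.update d i y) with hEydef
  set Ex := epsGlob N α β δ ϱ L d with hExdef
  set E0 := epsGlob N α β δ ϱ L (Function.update d i 0) with hE0def
  have hPA : P i = ψ i - A := by simp only [hPdef, hA]
  suffices key : 0 ≤ P i * (Ey - Ex) + c i * (y - d i) by
    rw [hPA] at key
    linarith [key]
  -- express the two global errors through the i-th strategy
  set S := ∑ j ∈ Finset.univ.erase i, (α * (L j + d j) ^ (-β) - δ) with hS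
  have hEyx : Ey = Real.exp (((1/(N:ℝ)) * ((α * (L i + y) ^ (-β) - δ) + S) - 1)/ϱ) := by
    rw [hEydef]
    unfold epsGlob
    rw [sum_update_eq (fun j t => α * (L j + t) ^ (-β) - δ) d i y]
  have hExx : Ex = Real.exp (((1/(N:ℝ)) * ((α * (L i + d i) ^ (-β) - δ) + S) - 1)/ϱ) := by
    rw [hExdef]
    conv_lhs => rw [← Function.update_eq_self i d]
    unfold epsGlob
    rw [sum_update_eq (fun j t => α * (L j + t) ^ (-β) - δ) d i (d i)]
  set u := ((1/(N:ℝ)) * ((α * (L i + y) ^ (-β) - δ) + S) - 1)/ϱ with hu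
  set v := ((1/(N:ℝ)) * ((α * (L i + d i) ^ (-β) - δ) + S) - 1)/ϱ with hv
  have hEve : Real.exp v = e := by rw [← hExx, hExdef]; exact hfix
  have h3 : u - v = α * ((L i + y) ^ (-β) - (L i + d i) ^ (-β)) / ((N:ℝ) * ϱ) := by
    rw [hu, hv]
    field_simp
    ring
  have h4 : -β * (L i + d i) ^ (-β - 1) * (y - d i)
      ≤ (L i + y) ^ (-β) - (L i + d i) ^ (-β) := by
    have h := rpow_neg_tangent hβ hLx hLy
    nlinarith [h]
  set T := (L i + d i) ^ (-β - 1) with hT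
  have hTpos : 0 < T := by rw [hT]; exact Real.rpow_pos_of_pos hLx _
  set W := P i * e * α * β / (c i * ((N:ℝ) * ϱ)) with hW
  have hWpos : 0 < W := by rw [hW]; positivity
  have hqe : q i e = W ^ (1/(β+1)) := by simp only [hqdef, hW]
  have hb1 : β + 1 ≠ 0 := by positivity
  have hWpow : (q i e) ^ (β+1) = W := by
    rw [hqe, ← Real.rpow_mul hWpos.le]
    have h1 : 1/(β+1) * (β+1) = 1 := by field_simp
    rw [h1, Real.rpow_one]
  have hinv : T * (L i + d i) ^ (β+1) = 1 := by
    have hz : (-β - 1) + (β + 1) = 0 := by ring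
    rw [hT, ← Real.rpow_add hLx, hz, Real.rpow_zero]
  have hqnn : 0 ≤ q i e := by rw [hqe]; positivity
  have hxval : d i = max m (min M (q i e - L i)) := by rw [hd]
  -- KKT sign condition at the clamped best response
  have hbracket : 0 ≤ (c i - c i * (W * T)) * (y - d i) := by
    rcases le_or_gt (q i e - L i) m with hcase1 | hcase1
    · -- clamped below: d i = m, marginal utility nonpositive, deviations go up
      have hxeq : d i = m := by
        rw [hxval, min_eq_right (le_trans hcase1 hmM.le), max_eq_left hcase1]
      have hqLx : q i e ≤ L i + d i := by rw [hxeq]; linarith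
      have hWle : W ≤ (L i + d i) ^ (β+1) := by
        rw [← hWpow]
        exact Real.rpow_le_rpow hqnn hqLx (by linarith)
      have hWT : W * T ≤ 1 := by
        have h5 := mul_le_mul_of_nonneg_right hWle hTpos.le
        linarith [hinv, h5]
      have hyx : 0 ≤ y - d i := by rw [hxeq]; linarith
      apply mul_nonneg _ hyx
      have h6 := mul_le_mul_of_nonneg_left hWT hci.le
      linarith [h6]
    · rcases le_or_gt M (q i e - L i) with hcase2 | hcase2
      · -- clamped above: d i = M
        have hxeq : d i = M := by
          rw [hxval, min_eq_left hcase2, max_eq_right hmM.le]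
        have hqLx : L i + d i ≤ q i e := by rw [hxeq]; linarith
        have hWge : (L i + d i) ^ (β+1) ≤ W := by
          rw [← hWpow]
          exact Real.rpow_le_rpow hLx.le hqLx (by linarith)
        have hWT : 1 ≤ W * T := by
          have h5 := mul_le_mul_of_nonneg_right hWge hTpos.le
          linarith [hinv, h5]
        have hyx : y - d i ≤ 0 := by rw [hxeq]; linarith
        have hbr : c i - c i * (W * T) ≤ 0 := by
          have h6 := mul_le_mul_of_nonneg_left hWT hci.le
          linarith [h6]
        have h7 : 0 ≤ (-(c i - c i * (W * T))) * (-(y - d i)) :=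
          mul_nonneg (by linarith) (by linarith)
        linarith [h7]
      · -- interior: first-order condition holds exactly
        have hxeq : d i = q i e - L i := by
          rw [hxval, min_eq_right hcase2.le, max_eq_right hcase1.le]
        have hqx : L i + d i = q i e := by rw [hxeq]; ring
        have hWeq : W = (L i + d i) ^ (β+1) := by rw [← hWpow, hqx]
        have hWT : W * T = 1 := by rw [hWeq]; linarith [hinv]
        rw [hWT]
        norm_num
  -- assemble the chain of inequalities
  have hA1 : P i * (Real.exp v * (u - v)) ≤ P i * (Ey - Ex) := by
    rw [hEyx, hExx]
    have h5 := exp_tangent u v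
    apply mul_le_mul_of_nonneg_left _ hPi.le
    linarith [h5]
  have h4' : P i * (e * (α * (-β * T * (y - d i)) / ((N:ℝ)*ϱ)))
      ≤ P i * (e * (α * ((L i + y) ^ (-β) - (L i + d i) ^ (-β)) / ((N:ℝ)*ϱ))) := by
    apply mul_le_mul_of_nonneg_left _ hPi.le
    apply mul_le_mul_of_nonneg_left _ hepos.le
    apply div_le_div_of_nonneg_right _ (by positivity)
    apply mul_le_mul_of_nonneg_left _ hα.le
    rw [hT]
    exact h4
  have hB : P i * (Real.exp v * (u - v))
      = P i * (e * (α * ((L i + y) ^ (-β) - (L i + d i) ^ (-β)) / ((N:ℝ)*ϱ))) := by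
    rw [hEve, h3]
  have hc0 : c i ≠ 0 := hci.ne'
  have hN0 : ((N:ℝ)) ≠ 0 := hn.ne'
  have hϱ0 : ϱ ≠ 0 := hϱ.ne'
  have hD : P i * (e * (α * (-β * T * (y - d i)) / ((N:ℝ)*ϱ)))
      = -(c i * (W * T) * (y - d i)) := by
    rw [hW]
    field_simp
  have s1 : -(c i * (W * T) * (y - d i)) ≤ P i * (Ey - Ex) := by
    calc -(c i * (W * T) * (y - d i))
        = P i * (e * (α * (-β * T * (y - d i)) / ((N:ℝ)*ϱ))) := hD.symm
      _ ≤ P i * (e * (α * ((L i + y) ^ (-β) - (L i + d i) ^ (-β)) / ((N:ℝ)*ϱ))) := h4'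
      _ = P i * (Real.exp v * (u - v)) := hB.symm
      _ ≤ P i * (Ey - Ex) := hA1
  linarith [s1, hbracket]
end

section
/- A profile d* ∈ ∏_{i<N} [m, M] is a pure-strategy Nash equilibrium of the game (i.e., for every i and every y ∈ [m, M], U_i(d* with i-th coordinate y) ≤ U_i(d*)) if and only if for every i, the i-th coordinate d*_i minimizes the one-variable function y ↦ F(d* with i-th coordinate y) over [m, M], where F(d) = ε(d) − Σ_{i<N} (c_i/z_i)·d_i. -/
open Real Finset

lemma zWeight_neg (N : ℕ) (ψ φ : Fin N → ℝ) (γ : Fin N → Fin N → ℝ) (ξ : ℝ)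
    (hψ : ∀ i, 0 < ψ i) (hγ : ∀ i j, γ i j ∈ Set.Icc (0 : ℝ) 1)
    (hξ : ∀ j, ξ ≤ φ j) (i : Fin N) : zWeight N ψ φ γ ξ i < 0 := by
  have hsum : (∑ j ∈ Finset.univ.erase i, γ i j * (ξ - φ j)) ≤ 0 := by
    apply Finset.sum_nonpos
    intro j _
    exact mul_nonpos_of_nonneg_of_nonpos (hγ i j).1 (by linarith [hξ j])
  have := hψ i
  unfold zWeight
  linarith

lemma sum_update_aux (N : ℕ) (g d : Fin N → ℝ) (i : Fin N) (y : ℝ) :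
    ∑ j, g j * Function.update d i y j = (∑ j, g j * d j) + g i * (y - d i) := by
  have h1 : (fun j => g j * Function.update d i y j)
      = Function.update (fun j => g j * d j) i (g i * y) := by
    ext j
    rcases eq_or_ne j i with rfl | hj
    · simp
    · simp [Function.update_apply, hj]
  rw [h1, Finset.sum_update_of_mem (Finset.mem_univ i),
    ← Finset.add_sum_erase _ (fun j => g j * d j) (Finset.mem_univ i),
    Finset.sdiff_singleton_eq_erase]
  ring

lemma key_identity (N : ℕ) (α β δ ϱ : ℝ) (L c ψ φ K : Fin N → ℝ)
    (γ : Fin N → Fin N → ℝ) (ξ ε0 : ℝ) (i : Fin N) (d : Fin N → ℝ) (y : ℝ)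
    (hz : ∀ j, zWeight N ψ φ γ ξ j ≠ 0) :
    utility N α β δ ϱ L c ψ φ K γ ξ ε0 i (Function.update d i y)
      - utility N α β δ ϱ L c ψ φ K γ ξ ε0 i d
    = zWeight N ψ φ γ ξ i *
      (potential N α β δ ϱ L c (zWeight N ψ φ γ ξ) (Function.update d i y)
        - potential N α β δ ϱ L c (zWeight N ψ φ γ ξ) d) := by
  set z := zWeight N ψ φ γ ξ
  set e := epsGlob N α β δ ϱ L d with he
  set eu := epsGlob N α β δ ϱ L (Function.update d i y) with heu
  set e0 := epsGlob N α β δ ϱ L (Function.update d i 0) with he0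
  have hupd : Function.update (Function.update d i y) i 0 = Function.update d i 0 :=
    Function.update_idem ..
  have hSi : z i = (∑ j ∈ Finset.univ.erase i, γ i j * (ξ - φ j)) - ψ i := rfl
  have hsum : ∑ j ∈ Finset.univ.erase i, (ξ - φ j) * γ i j * (eu - e0)
      = ((∑ j ∈ Finset.univ.erase i, γ i j * (ξ - φ j))) * (eu - e0) := by
    rw [Finset.sum_mul]; apply Finset.sum_congr rfl; intro j _; ring
  have hsum' : ∑ j ∈ Finset.univ.erase i, (ξ - φ j) * γ i j * (e - e0)
      = ((∑ j ∈ Finset.univ.erase i, γ i j * (ξ - φ j))) * (e - e0) := by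
    rw [Finset.sum_mul]; apply Finset.sum_congr rfl; intro j _; ring
  have hpsum := sum_update_aux N (fun j => c j / z j) d i y
  have hci : z i * (c i / z i) = c i := by
    field_simp [hz i]
  unfold utility potential
  rw [hupd]
  simp only [Function.update_self]
  rw [hsum, hsum', hpsum, ← he, ← heu]
  set S := ∑ j ∈ Finset.univ.erase i, γ i j * (ξ - φ j)
  have hS : z i = S - ψ i := hSi
  linear_combination (e - eu) * hS + (y - d i) * hci

/-- A profile `d*` in the box is a pure-strategy Nash equilibrium iff
each coordinate `d*_i` minimizes `y ↦ F(d* with i-th coordinate y)` over `[m, M]`. -/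
theorem nash_iff_coordinatewise_min (N : ℕ) (hN : 1 ≤ N) (α β δ ϱ : ℝ) (hα : 0 < α) (hβ : 0 < β)
    (hϱ : 0 < ϱ) (hδ : 0 ≤ δ) (L c ψ φ K : Fin N → ℝ)
    (hL : ∀ i, 0 < L i) (hc : ∀ i, 0 < c i) (hψ : ∀ i, 0 < ψ i) (hφ : ∀ j, 0 < φ j)
    (hK : ∀ i, 0 ≤ K i)
    (γ : Fin N → Fin N → ℝ) (hγ : ∀ i j, γ i j ∈ Set.Icc (0 : ℝ) 1)
    (ξ : ℝ) (hξ0 : 0 ≤ ξ) (hξ : ∀ j, ξ ≤ φ j) (ε0 : ℝ) 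
    (m M : ℝ) (hm : 0 ≤ m) (hmM : m < M)
    (dstar : Fin N → ℝ) (hdstar : ∀ i, dstar i ∈ Set.Icc m M) :
    (∀ i : Fin N, ∀ y ∈ Set.Icc m M,
        utility N α β δ ϱ L c ψ φ K γ ξ ε0 i (Function.update dstar i y)
          ≤ utility N α β δ ϱ L c ψ φ K γ ξ ε0 i dstar)
      ↔ (∀ i : Fin N, ∀ y ∈ Set.Icc m M,
          potential N α β δ ϱ L c (zWeight N ψ φ γ ξ) dstar
            ≤ potential N α β δ ϱ L c (zWeight N ψ φ γ ξ) (Function.update dstar i y)) := by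
  have hzneg : ∀ j, zWeight N ψ φ γ ξ j < 0 := zWeight_neg N ψ φ γ ξ hψ hγ hξ
  have hz : ∀ j, zWeight N ψ φ γ ξ j ≠ 0 := fun j => (hzneg j).ne
  constructor
  · intro h i y hy
    have hid := key_identity N α β δ ϱ L c ψ φ K γ ξ ε0 i dstar y hz
    have hU := h i y hy
    nlinarith [hzneg i]
  · intro h i y hy
    have hid := key_identity N α β δ ϱ L c ψ φ K γ ξ ε0 i dstar y hz
    have hF := h i y hy
    nlinarith [hzneg i]
end

section
/- A profile d* ∈ ∏_{i<N} [m, M] is a pure-strategy Nash equilibrium of the game (i.e., for every i and every y ∈ [m, M], U_i(d* with i-th coordinate y) ≤ U_i(d*)) if and only if d* is a global minimizer of the potential F(d) = ε(d) − Σ_{i<N} (c_i/z_i)·d_i over the box ∏_{i<N} [m, M]. -/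
open Real Finset

lemma rpow_tangent {β a b : ℝ} (hβ : 0 < β) (ha : 0 < a) (hb : 0 < b) :
    a ^ (-β) - β * a ^ (-β - 1) * (b - a) ≤ b ^ (-β) := by
  have hba : 0 < b / a := div_pos hb ha
  have h1 : Real.log (b / a) ≤ b / a - 1 := Real.log_le_sub_one_of_pos hba
  have h2 : 1 + -β * Real.log (b / a) ≤ (b / a) ^ (-β) := by
    rw [Real.rpow_def_of_pos hba]
    have := Real.add_one_le_exp (Real.log (b / a) * (-β))
    linarith
  have h3 : 1 - β * (b / a - 1) ≤ (b / a) ^ (-β) := by nlinarith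
  have ha' : (0:ℝ) < a ^ (-β) := Real.rpow_pos_of_pos ha _
  have h4 : a ^ (-β) * (1 - β * (b / a - 1)) ≤ a ^ (-β) * ((b / a) ^ (-β)) :=
    mul_le_mul_of_nonneg_left h3 ha'.le
  have h5 : a ^ (-β) * (b / a) ^ (-β) = b ^ (-β) := by
    rw [Real.div_rpow hb.le ha.le]
    field_simp
  have h6 : a ^ (-β - 1) = a ^ (-β) / a := by
    rw [Real.rpow_sub ha, Real.rpow_one]
  have h7 : a ^ (-β) * (1 - β * (b / a - 1)) = a ^ (-β) - β * (a ^ (-β) / a) * (b - a) := by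
    field_simp
  rw [h6]
  linarith [h4, h5 ▸ h4]

lemma rpow_chord {β x y t : ℝ} (hβ : 0 < β) (hx : 0 < x) (hy : 0 < y) (ht0 : 0 ≤ t)
    (ht1 : t ≤ 1) :
    ((1 - t) * x + t * y) ^ (-β) ≤ (1 - t) * x ^ (-β) + t * y ^ (-β) := by
  have hp : 0 < (1 - t) * x + t * y := by
    rcases lt_or_eq_of_le ht1 with h | h
    · nlinarith [mul_pos (by linarith : (0:ℝ) < 1 - t) hx, mul_nonneg ht0 hy.le]
    · subst h; simpa using hy
  have h1 := rpow_tangent hβ hp hx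
  have h2 := rpow_tangent hβ hp hy
  have h1' := mul_le_mul_of_nonneg_left h1 (by linarith : (0:ℝ) ≤ 1 - t)
  have h2' := mul_le_mul_of_nonneg_left h2 ht0
  have key : (1 - t) * (((1 - t) * x + t * y) ^ (-β)
        - β * ((1 - t) * x + t * y) ^ (-β - 1) * (x - ((1 - t) * x + t * y)))
      + t * (((1 - t) * x + t * y) ^ (-β)
        - β * ((1 - t) * x + t * y) ^ (-β - 1) * (y - ((1 - t) * x + t * y)))
      = ((1 - t) * x + t * y) ^ (-β) := by ring
  linarith

lemma nonneg_of_forall_ge_neg_mul {X C l0 : ℝ} (hC : 0 ≤ C) (hl : 0 < l0)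
    (h : ∀ l : ℝ, 0 < l → l ≤ l0 → -(C * l) ≤ X) : 0 ≤ X := by
  by_contra hX
  push_neg at hX
  have hC1 : (0:ℝ) < C + 1 := by linarith
  have hl1 : 0 < min l0 (-X / (C + 1)) := lt_min hl (div_pos (by linarith) hC1)
  have h3 := h _ hl1 (min_le_left _ _)
  have hl3 : min l0 (-X / (C + 1)) ≤ -X / (C + 1) := min_le_right _ _
  have h5 : C * min l0 (-X / (C + 1)) ≤ C * (-X / (C + 1)) := mul_le_mul_of_nonneg_left hl3 hC
  have h4 : C * (-X / (C + 1)) = -(C * X) / (C + 1) := by ring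
  have h6 : -X ≤ -(C * X) / (C + 1) := by linarith
  have h7 := mul_le_mul_of_nonneg_right h6 hC1.le
  have h8 : -(C * X) / (C + 1) * (C + 1) = -(C * X) := by field_simp
  nlinarith

set_option maxHeartbeats 1000000

/-- A profile `d*` in the box is a pure-strategy Nash equilibrium iff
it is a global minimizer of the potential `F` over the box `∏_i [m, M]`. -/
theorem nash_iff_potential_minimizer (N : ℕ) (hN : 1 ≤ N) (α β δ ϱ : ℝ) (hα : 0 < α) (hβ : 0 < β)
    (hϱ : 0 < ϱ) (hδ : 0 ≤ δ) (L c ψ φ K : Fin N → ℝ)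
    (hL : ∀ i, 0 < L i) (hc : ∀ i, 0 < c i) (hψ : ∀ i, 0 < ψ i) (hφ : ∀ j, 0 < φ j)
    (hK : ∀ i, 0 ≤ K i)
    (γ : Fin N → Fin N → ℝ) (hγ : ∀ i j, γ i j ∈ Set.Icc (0 : ℝ) 1)
    (ξ : ℝ) (hξ0 : 0 ≤ ξ) (hξ : ∀ j, ξ ≤ φ j) (ε0 : ℝ) 
    (m M : ℝ) (hm : 0 ≤ m) (hmM : m < M)
    (dstar : Fin N → ℝ) (hdstar : ∀ i, dstar i ∈ Set.Icc m M) :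
    (∀ i : Fin N, ∀ y ∈ Set.Icc m M,
        utility N α β δ ϱ L c ψ φ K γ ξ ε0 i (Function.update dstar i y)
          ≤ utility N α β δ ϱ L c ψ φ K γ ξ ε0 i dstar)
      ↔ (∀ d : Fin N → ℝ, (∀ i, d i ∈ Set.Icc m M) →
          potential N α β δ ϱ L c (zWeight N ψ φ γ ξ) dstar
            ≤ potential N α β δ ϱ L c (zWeight N ψ φ γ ξ) d) := by
  classical
  set z := zWeight N ψ φ γ ξ with hz_def
  have hN0 : (0:ℝ) < (N:ℝ) := by exact_mod_cast Nat.lt_of_lt_of_le Nat.zero_lt_one hN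
  have hNϱ : (0:ℝ) < (N:ℝ) * ϱ := mul_pos hN0 hϱ
  have hNne : (N:ℝ) ≠ 0 := hN0.ne'
  have hϱne : ϱ ≠ 0 := hϱ.ne'
  have hzneg : ∀ i, z i < 0 := by
    intro i
    have hsum : ∑ j ∈ Finset.univ.erase i, γ i j * (ξ - φ j) ≤ 0 :=
      Finset.sum_nonpos fun j _ => mul_nonpos_of_nonneg_of_nonpos (hγ i j).1 (by linarith [hξ j])
    have := hψ i
    simp only [hz_def, zWeight]
    linarith
  have sum_update : ∀ (f : Fin N → ℝ → ℝ) (d : Fin N → ℝ) (i : Fin N) (y : ℝ),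
      ∑ j, f j (Function.update d i y j) = (∑ j, f j (d j)) + (f i y - f i (d i)) := by
    intro f d i y
    have h1 : ∑ j, f j (Function.update d i y j)
        = f i y + ∑ j ∈ Finset.univ.erase i, f j (d j) := by
      rw [← Finset.add_sum_erase Finset.univ (fun j => f j (Function.update d i y j))
        (Finset.mem_univ i), Function.update_self]
      congr 1
      refine Finset.sum_congr rfl fun j hj => ?_
      rw [Function.update_of_ne (Finset.ne_of_mem_erase hj)]
    have h2 : ∑ j, f j (d j) = f i (d i) + ∑ j ∈ Finset.univ.erase i, f j (d j) :=
      (Finset.add_sum_erase Finset.univ (fun j => f j (d j)) (Finset.mem_univ i)).symm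
    rw [h1, h2]; ring
  have heps_update : ∀ (d : Fin N → ℝ) (i : Fin N) (y : ℝ),
      epsGlob N α β δ ϱ L (Function.update d i y)
        = epsGlob N α β δ ϱ L d
          * Real.exp ((α * (L i + y) ^ (-β) - α * (L i + d i) ^ (-β)) / ((N:ℝ) * ϱ)) := by
    intro d i y
    unfold epsGlob
    rw [← Real.exp_add]
    congr 1
    rw [sum_update (fun j t => α * (L j + t) ^ (-β) - δ) d i y]
    field_simp
    ring
  have hpot : ∀ (d : Fin N → ℝ) (i : Fin N) (y : ℝ),
      potential N α β δ ϱ L c z (Function.update d i y)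
        = potential N α β δ ϱ L c z d
          + ((epsGlob N α β δ ϱ L (Function.update d i y) - epsGlob N α β δ ϱ L d)
            - c i / z i * (y - d i)) := by
    intro d i y
    unfold potential
    rw [sum_update (fun j t => c j / z j * t) d i y]
    ring
  have hutil : ∀ (d : Fin N → ℝ) (i : Fin N) (y : ℝ),
      utility N α β δ ϱ L c ψ φ K γ ξ ε0 i (Function.update d i y)
        - utility N α β δ ϱ L c ψ φ K γ ξ ε0 i d
      = z i * ((epsGlob N α β δ ϱ L (Function.update d i y) - epsGlob N α β δ ϱ L d)
          - c i / z i * (y - d i)) := by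
    intro d i y
    have hzne : z i ≠ 0 := (hzneg i).ne
    have hcz : z i * (c i / z i * (y - d i)) = c i * (y - d i) := by
      field_simp
    have key : ∀ X : ℝ, ∑ j ∈ Finset.univ.erase i, (ξ - φ j) * γ i j * X
        = (∑ j ∈ Finset.univ.erase i, γ i j * (ξ - φ j)) * X := by
      intro X; rw [Finset.sum_mul]
      exact Finset.sum_congr rfl fun j _ => by ring
    have hzi : (∑ j ∈ Finset.univ.erase i, γ i j * (ξ - φ j)) = z i + ψ i := by
      simp only [hz_def, zWeight]; ring
    unfold utility
    rw [Function.update_idem, Function.update_self, key, key, hzi]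
    field_simp
    ring
  have hUF : ∀ (i : Fin N) (y : ℝ),
      (utility N α β δ ϱ L c ψ φ K γ ξ ε0 i (Function.update dstar i y)
          ≤ utility N α β δ ϱ L c ψ φ K γ ξ ε0 i dstar)
        ↔ potential N α β δ ϱ L c z dstar
            ≤ potential N α β δ ϱ L c z (Function.update dstar i y) := by
    intro i y
    have hA := hpot dstar i y
    have hU := hutil dstar i y
    set A := (epsGlob N α β δ ϱ L (Function.update dstar i y) - epsGlob N α β δ ϱ L dstar)
      - c i / z i * (y - dstar i) with hA_def
    constructor
    · intro h
      have hd : z i * A ≤ 0 := by linarith [hU]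
      have hAnn : 0 ≤ A := by
        by_contra hA2
        push_neg at hA2
        nlinarith [mul_pos_of_neg_of_neg (hzneg i) hA2]
      linarith [hA]
    · intro h
      have hAnn : 0 ≤ A := by linarith [hA]
      have h2 : z i * A ≤ 0 := mul_nonpos_of_nonpos_of_nonneg (hzneg i).le hAnn
      linarith [hU]
  constructor
  · -- Nash ⟹ potential minimizer
    intro hNash d hd
    have hcmin : ∀ (i : Fin N), ∀ y ∈ Set.Icc m M,
        potential N α β δ ϱ L c z dstar ≤ potential N α β δ ϱ L c z (Function.update dstar i y) :=
      fun i y hy => (hUF i y).1 (hNash i y hy)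
    set E := epsGlob N α β δ ϱ L dstar with hE_def
    have hE : 0 < E := by rw [hE_def]; exact Real.exp_pos _
    set V : Fin N → ℝ := fun i =>
      (α * (L i + d i) ^ (-β) - α * (L i + dstar i) ^ (-β)) / ((N:ℝ) * ϱ) with hV_def
    have heps_d : epsGlob N α β δ ϱ L d = E * Real.exp (∑ i, V i) := by
      have h1 : ∑ i, V i
          = ((∑ j, (α * (L j + d j) ^ (-β) - δ)) - ∑ j, (α * (L j + dstar j) ^ (-β) - δ))
            / ((N:ℝ) * ϱ) := by
        rw [← Finset.sum_sub_distrib, Finset.sum_div]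
        refine Finset.sum_congr rfl fun j _ => ?_
        simp only [hV_def]
        ring
      rw [hE_def]
      unfold epsGlob
      rw [← Real.exp_add]
      congr 1
      rw [h1]
      field_simp
      ring
    have hper : ∀ i : Fin N, 0 ≤ E * V i + (-(c i / z i)) * (d i - dstar i) := by
      intro i
      have hxM := hdstar i
      have hdM := hd i
      have hLx : 0 < L i + dstar i := by have := hL i; have := hxM.1; linarith
      have hLd : 0 < L i + d i := by have := hL i; have := hdM.1; linarith
      set Δ := d i - dstar i with hΔ_def
      set q : ℝ := -(α * β * (L i + dstar i) ^ (-β - 1) * Δ) / ((N:ℝ) * ϱ) with hq_def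
      have hVB : V i ≤ |V i| + |q| := le_trans (le_abs_self _) (le_add_of_nonneg_right (abs_nonneg _))
      have hqB : -(|V i| + |q|) ≤ q := by
        have := neg_abs_le q
        have := abs_nonneg (V i)
        linarith
      have hB0 : (0:ℝ) ≤ |V i| + |q| := by positivity
      refine nonneg_of_forall_ge_neg_mul (C := E * (|V i| + |q|) ^ 2)
        (l0 := min 1 (1 / (|V i| + |q| + 1))) (by positivity)
        (lt_min one_pos (by positivity)) ?_
      intro l hl0 hll
      have hl1 : l ≤ 1 := hll.trans (min_le_left _ _)
      have hlB : l ≤ 1 / (|V i| + |q| + 1) := hll.trans (min_le_right _ _)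
      have hyl : dstar i + l * Δ ∈ Set.Icc m M := by
        constructor
        · have h1 : dstar i + l * Δ = (1 - l) * dstar i + l * (d i) := by rw [hΔ_def]; ring
          rw [h1]
          nlinarith [hxM.1, hdM.1]
        · have h1 : dstar i + l * Δ = (1 - l) * dstar i + l * (d i) := by rw [hΔ_def]; ring
          rw [h1]
          nlinarith [hxM.2, hdM.2]
      have hLyl : 0 < L i + (dstar i + l * Δ) := by
        have := hL i
        have := hyl.1
        linarith
      set w := (α * (L i + (dstar i + l * Δ)) ^ (-β) - α * (L i + dstar i) ^ (-β)) / ((N:ℝ) * ϱ)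
        with hw_def
      have hmin' := hcmin i (dstar i + l * Δ) hyl
      rw [hpot dstar i (dstar i + l * Δ), heps_update dstar i (dstar i + l * Δ)] at hmin'
      rw [← hE_def, ← hw_def] at hmin'
      have hkey : 0 ≤ (E * Real.exp w - E) + (-(c i / z i)) * (l * Δ) := by
        have h1 : dstar i + l * Δ - dstar i = l * Δ := by ring
        rw [h1] at hmin'
        linarith [hmin']
      -- chord : w ≤ l * V i
      have hchord := rpow_chord (x := L i + dstar i) (y := L i + d i) (t := l) hβ hLx hLd hl0.le hl1
      have harg : (1 - l) * (L i + dstar i) + l * (L i + d i) = L i + (dstar i + l * Δ) := by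
        rw [hΔ_def]; ring
      rw [harg] at hchord
      have hwV : w ≤ l * V i := by
        rw [hw_def]
        have h2 : α * (L i + (dstar i + l * Δ)) ^ (-β) - α * (L i + dstar i) ^ (-β)
            ≤ l * (α * (L i + d i) ^ (-β) - α * (L i + dstar i) ^ (-β)) := by
          have := mul_le_mul_of_nonneg_left hchord hα.le
          linarith [this]
        have h3 : l * V i
            = (l * (α * (L i + d i) ^ (-β) - α * (L i + dstar i) ^ (-β))) / ((N:ℝ) * ϱ) := by
          simp only [hV_def]; ring
        rw [h3]
        exact (div_le_div_iff_of_pos_right hNϱ).mpr h2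
      -- tangent : l * q ≤ w
      have htan := rpow_tangent (a := L i + dstar i) (b := L i + (dstar i + l * Δ)) hβ hLx hLyl
      have hwq : l * q ≤ w := by
        rw [hw_def, hq_def]
        have h2 : l * -(α * β * (L i + dstar i) ^ (-β - 1) * Δ)
            ≤ α * (L i + (dstar i + l * Δ)) ^ (-β) - α * (L i + dstar i) ^ (-β) := by
          linarith [mul_le_mul_of_nonneg_left htan hα.le]
        have h3 : l * (-(α * β * (L i + dstar i) ^ (-β - 1) * Δ) / ((N:ℝ) * ϱ))
            = (l * -(α * β * (L i + dstar i) ^ (-β - 1) * Δ)) / ((N:ℝ) * ϱ) := by ring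
        rw [h3]
        exact (div_le_div_iff_of_pos_right hNϱ).mpr h2
      have h1w : w ≤ l * (|V i| + |q|) := hwV.trans (mul_le_mul_of_nonneg_left hVB hl0.le)
      have h2w : -(l * (|V i| + |q|)) ≤ w := by
        have := mul_le_mul_of_nonneg_left hqB hl0.le
        linarith [hwq]
      have habs : |w| ≤ l * (|V i| + |q|) := abs_le.mpr ⟨h2w, h1w⟩
      have hw1 : |w| ≤ 1 := by
        have ha1 : l * (|V i| + |q|) ≤ (1 / (|V i| + |q| + 1)) * (|V i| + |q|) :=
          mul_le_mul_of_nonneg_right hlB hB0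
        have ha2 : (1 / (|V i| + |q| + 1)) * (|V i| + |q|) ≤ 1 := by
          rw [div_mul_eq_mul_div, div_le_one (by linarith)]
          linarith
        linarith
      have hexpw := Real.abs_exp_sub_one_sub_id_le hw1
      have hw2 : w ^ 2 ≤ (l * (|V i| + |q|)) ^ 2 := by
        have := pow_le_pow_left₀ (abs_nonneg w) habs 2
        simpa [sq_abs] using this
      have hexp_up : Real.exp w ≤ 1 + w + w ^ 2 := by
        have := abs_le.mp hexpw
        linarith [this.2]
      have h5 := mul_le_mul_of_nonneg_left hexp_up hE.le
      have h6 := mul_le_mul_of_nonneg_left hwV hE.le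
      have h7 := mul_le_mul_of_nonneg_left hw2 hE.le
      have hG : 0 ≤ l * (E * V i + -(c i / z i) * Δ + l * (E * (|V i| + |q|) ^ 2)) := by
        linarith [hkey, h5, h6, h7]
      have hG2 : 0 ≤ E * V i + -(c i / z i) * Δ + l * (E * (|V i| + |q|) ^ 2) := by
        have h9 : l * 0 ≤ l * (E * V i + -(c i / z i) * Δ + l * (E * (|V i| + |q|) ^ 2)) := by
          linarith [hG]
        have := (mul_le_mul_iff_right₀ hl0).mp h9
        linarith
      linarith [hG2]
    have hsum : 0 ≤ ∑ i, (E * V i + (-(c i / z i)) * (d i - dstar i)) :=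
      Finset.sum_nonneg fun i _ => hper i
    have hsplit : ∑ i, (E * V i + (-(c i / z i)) * (d i - dstar i))
        = E * (∑ i, V i) + (∑ i, c i / z i * dstar i - ∑ i, c i / z i * d i) := by
      rw [Finset.sum_add_distrib, ← Finset.mul_sum, ← Finset.sum_sub_distrib]
      congr 1
      refine Finset.sum_congr rfl fun i _ => by ring
    have hexpS := Real.add_one_le_exp (∑ i, V i)
    have h8 := mul_le_mul_of_nonneg_left hexpS hE.le
    unfold potential
    rw [← hE_def, heps_d]
    linarith [hsum, hsplit, h8]
  · -- potential minimizer ⟹ Nash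
    intro hmin i y hy
    apply (hUF i y).2
    apply hmin
    intro j
    by_cases hji : j = i
    · subst hji; simpa using hy
    · simpa [Function.update_of_ne hji] using hdstar j
end

section
/- The game has exactly one pure-strategy Nash equilibrium: there is a unique profile d* ∈ ∏_{i<N} [m, M] such that for every organization i and every y ∈ [m, M], U_i(d* with i-th coordinate y) ≤ U_i(d*). -/
open Real Finset

open Topology Filter

noncomputable def Bc (N : ℕ) (ψ φ : Fin N → ℝ) (γ : Fin N → Fin N → ℝ) (ξ : ℝ) (i : Fin N) : ℝ :=
  ψ i - ∑ j ∈ Finset.univ.erase i, (ξ - φ j) * γ i j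

noncomputable def Phi (N : ℕ) (α β δ ϱ : ℝ) (L c ψ φ : Fin N → ℝ) (γ : Fin N → Fin N → ℝ)
    (ξ : ℝ) (d : Fin N → ℝ) : ℝ :=
  - epsGlob N α β δ ϱ L d - ∑ j, c j / Bc N ψ φ γ ξ j * d j

lemma sum_update_split {N : ℕ} (f d : Fin N → ℝ) (i : Fin N) (y : ℝ) :
    ∑ j, f j * (Function.update d i y j)
      = f i * y + ∑ j ∈ Finset.univ.erase i, f j * d j := by
  rw [← Finset.add_sum_erase _ (fun j => f j * Function.update d i y j) (Finset.mem_univ i)]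
  congr 1
  · rw [Function.update_self]
  · exact Finset.sum_congr rfl fun j hj => by
      rw [Function.update_of_ne (Finset.mem_erase.mp hj).1]

lemma utility_eq {N : ℕ} {α β δ ϱ : ℝ} {L c ψ φ K : Fin N → ℝ} {γ : Fin N → Fin N → ℝ}
    {ξ ε0 : ℝ} {i : Fin N} (hB : Bc N ψ φ γ ξ i ≠ 0) (d : Fin N → ℝ) (y : ℝ) :
    utility N α β δ ϱ L c ψ φ K γ ξ ε0 i (Function.update d i y)
      = Bc N ψ φ γ ξ i * Phi N α β δ ϱ L c ψ φ γ ξ (Function.update d i y)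
        + (ψ i * ε0 - K i
            - (∑ j ∈ Finset.univ.erase i, (ξ - φ j) * γ i j)
                * epsGlob N α β δ ϱ L (Function.update d i 0)
            + Bc N ψ φ γ ξ i * ∑ j ∈ Finset.univ.erase i, c j / Bc N ψ φ γ ξ j * d j) := by
  unfold utility Phi
  rw [Function.update_idem, sum_update_split, Function.update_self, ← Finset.sum_mul]
  have hcy : Bc N ψ φ γ ξ i * (c i / Bc N ψ φ γ ξ i * y) = c i * y := by
    field_simp
  have hBA : Bc N ψ φ γ ξ i = ψ i - ∑ j ∈ Finset.univ.erase i, (ξ - φ j) * γ i j := rfl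
  linear_combination hcy + (epsGlob N α β δ ϱ L (Function.update d i y)) * hBA

lemma utility_sub {N : ℕ} {α β δ ϱ : ℝ} {L c ψ φ K : Fin N → ℝ} {γ : Fin N → Fin N → ℝ}
    {ξ ε0 : ℝ} {i : Fin N} (hB : Bc N ψ φ γ ξ i ≠ 0) (d : Fin N → ℝ) (y : ℝ) :
    utility N α β δ ϱ L c ψ φ K γ ξ ε0 i (Function.update d i y)
        - utility N α β δ ϱ L c ψ φ K γ ξ ε0 i d
      = Bc N ψ φ γ ξ i * (Phi N α β δ ϱ L c ψ φ γ ξ (Function.update d i y)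
          - Phi N α β δ ϱ L c ψ φ γ ξ d) := by
  have h1 := utility_eq (α := α) (β := β) (δ := δ) (ϱ := ϱ) (L := L) (c := c) (K := K)
    (ε0 := ε0) hB d y
  have h2 := utility_eq (α := α) (β := β) (δ := δ) (ϱ := ϱ) (L := L) (c := c) (K := K)
    (ε0 := ε0) hB d (d i)
  rw [Function.update_eq_self] at h2
  rw [h1, h2]; ring

lemma utility_le_iff {N : ℕ} {α β δ ϱ : ℝ} {L c ψ φ K : Fin N → ℝ} {γ : Fin N → Fin N → ℝ}
    {ξ ε0 : ℝ} {i : Fin N} (hB : 0 < Bc N ψ φ γ ξ i) (d : Fin N → ℝ) (y : ℝ) :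
    utility N α β δ ϱ L c ψ φ K γ ξ ε0 i (Function.update d i y)
        ≤ utility N α β δ ϱ L c ψ φ K γ ξ ε0 i d
      ↔ Phi N α β δ ϱ L c ψ φ γ ξ (Function.update d i y) ≤ Phi N α β δ ϱ L c ψ φ γ ξ d := by
  have hs := utility_sub (α := α) (β := β) (δ := δ) (ϱ := ϱ) (L := L) (c := c) (K := K)
    (ε0 := ε0) hB.ne' d y
  constructor
  · intro h
    by_contra h'
    push_neg at h'
    nlinarith [mul_pos hB (sub_pos.mpr h')]
  · intro h
    nlinarith [mul_nonneg hB.le (sub_nonneg.mpr h)]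

/-- tangent line inequality for `x ↦ x^(-β)`. -/
lemma tangent_rpow {β x y : ℝ} (hβ : 0 < β) (hx : 0 < x) (hy : 0 < y) :
    x ^ (-β) + (-β * x ^ (-β - 1)) * (y - x) ≤ y ^ (-β) := by
  have hr : 0 < y / x := div_pos hy hx
  have h1 : Real.log (y / x) ≤ y / x - 1 := Real.log_le_sub_one_of_pos hr
  have h2 : 1 + Real.log (y / x) * (-β) ≤ (y / x) ^ (-β) := by
    rw [Real.rpow_def_of_pos hr]
    linarith [Real.add_one_le_exp (Real.log (y / x) * (-β))]
  have h3 : 1 + (y / x - 1) * (-β) ≤ (y / x) ^ (-β) := by nlinarith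
  have hxb : (0 : ℝ) < x ^ (-β) := Real.rpow_pos_of_pos hx _
  have key : x ^ (-β) * (1 + (y / x - 1) * (-β)) ≤ x ^ (-β) * ((y / x) ^ (-β)) :=
    mul_le_mul_of_nonneg_left h3 hxb.le
  have hyx : x ^ (-β) * ((y / x) ^ (-β)) = y ^ (-β) := by
    rw [Real.div_rpow hy.le hx.le]; field_simp
  have hLHS : x ^ (-β) * (1 + (y / x - 1) * (-β))
      = x ^ (-β) + (-β * x ^ (-β - 1)) * (y - x) := by
    rw [Real.rpow_sub_one hx.ne' (-β)]; field_simp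
  linarith [key, hyx ▸ key, hLHS ▸ key]

lemma tangent_rpow_strict {β x y : ℝ} (hβ : 0 < β) (hx : 0 < x) (hy : 0 < y) (hne : y ≠ x) :
    x ^ (-β) + (-β * x ^ (-β - 1)) * (y - x) < y ^ (-β) := by
  have hr : 0 < y / x := div_pos hy hx
  have hr1 : y / x ≠ 1 := by
    intro h; exact hne (by field_simp at h; linarith)
  have h1 : Real.log (y / x) < y / x - 1 := Real.log_lt_sub_one_of_pos hr hr1
  have h2 : 1 + Real.log (y / x) * (-β) ≤ (y / x) ^ (-β) := by
    rw [Real.rpow_def_of_pos hr]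
    linarith [Real.add_one_le_exp (Real.log (y / x) * (-β))]
  have h3 : 1 + (y / x - 1) * (-β) < (y / x) ^ (-β) := by nlinarith
  have hxb : (0 : ℝ) < x ^ (-β) := Real.rpow_pos_of_pos hx _
  have key : x ^ (-β) * (1 + (y / x - 1) * (-β)) < x ^ (-β) * ((y / x) ^ (-β)) :=
    mul_lt_mul_of_pos_left h3 hxb
  have hyx : x ^ (-β) * ((y / x) ^ (-β)) = y ^ (-β) := by
    rw [Real.div_rpow hy.le hx.le]; field_simp
  have hLHS : x ^ (-β) * (1 + (y / x - 1) * (-β))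
      = x ^ (-β) + (-β * x ^ (-β - 1)) * (y - x) := by
    rw [Real.rpow_sub_one hx.ne' (-β)]; field_simp
  linarith [key]


noncomputable def gq (N : ℕ) (α β δ ϱ : ℝ) (L d : Fin N → ℝ) : ℝ :=
  ((1 / (N : ℝ)) * ∑ j, (α * (L j + d j) ^ (-β) - δ) - 1) / ϱ

lemma epsGlob_eq (N : ℕ) (α β δ ϱ : ℝ) (L d : Fin N → ℝ) :
    epsGlob N α β δ ϱ L d = Real.exp (gq N α β δ ϱ L d) := rfl

lemma gq_sub {N : ℕ} {α β δ ϱ : ℝ} (hN : (N : ℝ) ≠ 0) (hϱ : ϱ ≠ 0) (L d y : Fin N → ℝ) :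
    gq N α β δ ϱ L y - gq N α β δ ϱ L d
      = (α / (N * ϱ)) * ∑ j, ((L j + y j) ^ (-β) - (L j + d j) ^ (-β)) := by
  have key : ∑ j, (α * (L j + y j) ^ (-β) - δ) - ∑ j, (α * (L j + d j) ^ (-β) - δ)
      = α * ∑ j, ((L j + y j) ^ (-β) - (L j + d j) ^ (-β)) := by
    rw [← Finset.sum_sub_distrib, Finset.mul_sum]
    exact Finset.sum_congr rfl fun j _ => by ring
  unfold gq
  rw [div_sub_div_same]
  have h2 : (1 / (N:ℝ)) * ∑ j, (α * (L j + y j) ^ (-β) - δ) - 1 -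
      ((1 / (N:ℝ)) * ∑ j, (α * (L j + d j) ^ (-β) - δ) - 1)
      = (1 / (N:ℝ)) * (α * ∑ j, ((L j + y j) ^ (-β) - (L j + d j) ^ (-β))) := by
    rw [← key]; ring
  rw [h2]
  field_simp

lemma gq_update {N : ℕ} {α β δ ϱ : ℝ} (hN : (N : ℝ) ≠ 0) (hϱ : ϱ ≠ 0)
    (L d : Fin N → ℝ) (i : Fin N) (s : ℝ) :
    gq N α β δ ϱ L (Function.update d i s)
      = gq N α β δ ϱ L d + (α / (N * ϱ)) * ((L i + s) ^ (-β) - (L i + d i) ^ (-β)) := by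
  have h := gq_sub (α := α) (β := β) (δ := δ) hN hϱ L d (Function.update d i s)
  have hs : ∑ j, ((L j + Function.update d i s j) ^ (-β) - (L j + d j) ^ (-β))
      = (L i + s) ^ (-β) - (L i + d i) ^ (-β) := by
    rw [Finset.sum_eq_single i]
    · rw [Function.update_self]
    · intro j _ hj; rw [Function.update_of_ne hj]; ring
    · intro h; exact absurd (Finset.mem_univ i) h
  rw [hs] at h; linarith

noncomputable def Pc (N : ℕ) (α β δ ϱ : ℝ) (L c ψ φ : Fin N → ℝ) (γ : Fin N → Fin N → ℝ)
    (ξ : ℝ) (d : Fin N → ℝ) (i : Fin N) : ℝ :=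
  epsGlob N α β δ ϱ L d * (α / (N * ϱ)) * β * (L i + d i) ^ (-β - 1)
    - c i / Bc N ψ φ γ ξ i

lemma phi_strict {N : ℕ} {α β δ ϱ : ℝ} (hN : 0 < (N : ℝ)) (hα : 0 < α) (hβ : 0 < β)
    (hϱ : 0 < ϱ) {L c ψ φ : Fin N → ℝ} {γ : Fin N → Fin N → ℝ} {ξ : ℝ} {d y : Fin N → ℝ}
    (hd : ∀ j, 0 < L j + d j) (hy : ∀ j, 0 < L j + y j) (hne : y ≠ d) :
    Phi N α β δ ϱ L c ψ φ γ ξ y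
      < Phi N α β δ ϱ L c ψ φ γ ξ d
        + ∑ j, Pc N α β δ ϱ L c ψ φ γ ξ d j * (y j - d j) := by
  have hapos : 0 < α / (N * ϱ) := div_pos hα (mul_pos hN hϱ)
  obtain ⟨j0, hj0⟩ := Function.ne_iff.mp hne
  have hsum : ∑ j, ((L j + d j) ^ (-β) + (-β * (L j + d j) ^ (-β - 1)) * (y j - d j))
      < ∑ j, (L j + y j) ^ (-β) :=
    Finset.sum_lt_sum (fun j _ => by have := tangent_rpow hβ (hd j) (hy j); linarith)
      ⟨j0, Finset.mem_univ j0, by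
        have := tangent_rpow_strict hβ (hd j0) (hy j0)
          (fun h => hj0 (by linarith)); linarith⟩
  have hsum' : ∑ j, (-β * (L j + d j) ^ (-β - 1)) * (y j - d j)
      < ∑ j, ((L j + y j) ^ (-β) - (L j + d j) ^ (-β)) := by
    rw [Finset.sum_add_distrib] at hsum
    rw [Finset.sum_sub_distrib]
    linarith
  have hgq : (α / (N * ϱ)) * ∑ j, (-β * (L j + d j) ^ (-β - 1)) * (y j - d j)
      < gq N α β δ ϱ L y - gq N α β δ ϱ L d := by
    rw [gq_sub hN.ne' hϱ.ne' L d y]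
    exact mul_lt_mul_of_pos_left hsum' hapos
  have hEpos : 0 < epsGlob N α β δ ϱ L d := Real.exp_pos _
  have hEy : epsGlob N α β δ ϱ L d * (1 + (gq N α β δ ϱ L y - gq N α β δ ϱ L d))
      ≤ epsGlob N α β δ ϱ L y := by
    rw [epsGlob_eq, epsGlob_eq]
    have h1 := Real.add_one_le_exp (gq N α β δ ϱ L y - gq N α β δ ϱ L d)
    calc Real.exp (gq N α β δ ϱ L d) * (1 + (gq N α β δ ϱ L y - gq N α β δ ϱ L d))
        ≤ Real.exp (gq N α β δ ϱ L d) * Real.exp (gq N α β δ ϱ L y - gq N α β δ ϱ L d) :=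
          mul_le_mul_of_nonneg_left (by linarith) (Real.exp_pos _).le
      _ = Real.exp (gq N α β δ ϱ L y) := by rw [← Real.exp_add]; ring_nf
  have hkey : epsGlob N α β δ ϱ L d
      + epsGlob N α β δ ϱ L d
          * ((α / (N * ϱ)) * ∑ j, (-β * (L j + d j) ^ (-β - 1)) * (y j - d j))
      < epsGlob N α β δ ϱ L y := by
    have h2 := mul_lt_mul_of_pos_left hgq hEpos
    nlinarith
  have h3 : ∑ j, Pc N α β δ ϱ L c ψ φ γ ξ d j * (y j - d j)
      = (∑ j, epsGlob N α β δ ϱ L d * (α / (N * ϱ)) * β * (L j + d j) ^ (-β - 1) * (y j - d j))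
        - ∑ j, c j / Bc N ψ φ γ ξ j * (y j - d j) := by
    rw [← Finset.sum_sub_distrib]
    exact Finset.sum_congr rfl fun j _ => by unfold Pc; ring
  have hTeq : epsGlob N α β δ ϱ L d
        * ((α / (N * ϱ)) * ∑ j, (-β * (L j + d j) ^ (-β - 1)) * (y j - d j))
      = -(∑ j, epsGlob N α β δ ϱ L d * (α / (N * ϱ)) * β * (L j + d j) ^ (-β - 1) * (y j - d j)) := by
    rw [Finset.mul_sum, Finset.mul_sum, ← Finset.sum_neg_distrib]
    exact Finset.sum_congr rfl fun j _ => by ring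
  have hlam : ∑ j, c j / Bc N ψ φ γ ξ j * (y j - d j)
      = (∑ j, c j / Bc N ψ φ γ ξ j * y j) - ∑ j, c j / Bc N ψ φ γ ξ j * d j := by
    rw [← Finset.sum_sub_distrib]
    exact Finset.sum_congr rfl fun j _ => by ring
  unfold Phi
  linarith [hkey, h3, hTeq, hlam]

lemma hasDerivAt_phi_update {N : ℕ} {α β δ ϱ : ℝ} (hN : (N : ℝ) ≠ 0) (hϱ : ϱ ≠ 0)
    {L c ψ φ : Fin N → ℝ} {γ : Fin N → Fin N → ℝ} {ξ : ℝ} {d : Fin N → ℝ} {i : Fin N}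
    (hd : 0 < L i + d i) :
    HasDerivAt (fun s => Phi N α β δ ϱ L c ψ φ γ ξ (Function.update d i s))
      (Pc N α β δ ϱ L c ψ φ γ ξ d i) (d i) := by
  have heq : ∀ s : ℝ, Phi N α β δ ϱ L c ψ φ γ ξ (Function.update d i s)
      = -(Real.exp (gq N α β δ ϱ L d
            + (α / (N * ϱ)) * ((L i + s) ^ (-β) - (L i + d i) ^ (-β))))
        - (c i / Bc N ψ φ γ ξ i * s
            + ∑ j ∈ Finset.univ.erase i, c j / Bc N ψ φ γ ξ j * d j) := by
    intro s
    unfold Phi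
    rw [epsGlob_eq, gq_update hN hϱ, sum_update_split]
  have hinner : HasDerivAt (fun s : ℝ => (L i + s) ^ (-β))
      (-β * (L i + d i) ^ (-β - 1)) (d i) := by
    have h1 : HasDerivAt (fun s : ℝ => L i + s) 1 (d i) := (hasDerivAt_id (d i)).const_add (L i)
    have h2 := Real.hasDerivAt_rpow_const (x := L i + d i) (p := -β) (Or.inl hd.ne')
    have h3 := h2.comp (d i) h1
    rw [mul_one] at h3
    exact h3
  have hg : HasDerivAt (fun s : ℝ => gq N α β δ ϱ L d
        + (α / (N * ϱ)) * ((L i + s) ^ (-β) - (L i + d i) ^ (-β)))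
      ((α / (N * ϱ)) * (-β * (L i + d i) ^ (-β - 1))) (d i) := by
    have := ((hinner.sub_const ((L i + d i) ^ (-β))).const_mul (α / (N * ϱ))).const_add
      (gq N α β δ ϱ L d)
    simpa using this
  have hexp := hg.exp
  have hlin : HasDerivAt (fun s : ℝ => c i / Bc N ψ φ γ ξ i * s
        + ∑ j ∈ Finset.univ.erase i, c j / Bc N ψ φ γ ξ j * d j)
      (c i / Bc N ψ φ γ ξ i) (d i) := by
    simpa using ((hasDerivAt_id (d i)).const_mul (c i / Bc N ψ φ γ ξ i)).add_const
      (∑ j ∈ Finset.univ.erase i, c j / Bc N ψ φ γ ξ j * d j)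
  have htot := (hexp.neg).sub hlin
  have final := htot.congr_of_eventuallyEq (Filter.Eventually.of_forall heq)
  refine final.congr_deriv ?_
  have hval : gq N α β δ ϱ L d
      + (α / (N * ϱ)) * ((L i + d i) ^ (-β) - (L i + d i) ^ (-β)) = gq N α β δ ϱ L d := by
    ring
  rw [hval]
  unfold Pc
  rw [epsGlob_eq]
  ring

lemma deriv_mul_nonpos {q : ℝ → ℝ} {x P y m M : ℝ} (hq : HasDerivAt q P x)
    (hmax : ∀ s ∈ Set.Icc m M, q s ≤ q x) (hx : x ∈ Set.Icc m M) (hy : y ∈ Set.Icc m M) :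
    P * (y - x) ≤ 0 := by
  have ht := hasDerivAt_iff_tendsto_slope.mp hq
  rcases lt_trichotomy y x with h | h | h
  · -- show 0 ≤ P
    have hP : 0 ≤ P := by
      by_contra hP
      push_neg at hP
      have hev : ∀ᶠ s in 𝓝[≠] x, slope q x s < 0 := ht.eventually (Iio_mem_nhds hP)
      have hle : 𝓝[<] x ≤ 𝓝[≠] x :=
        nhdsWithin_mono x fun s hs => Set.mem_compl_singleton_iff.mpr (ne_of_lt hs)
      have hev' : ∀ᶠ s in 𝓝[<] x, slope q x s < 0 := hev.filter_mono hle
      have hmx : m < x := lt_of_le_of_lt hy.1 h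
      have hmem : ∀ᶠ s in 𝓝[<] x, s ∈ Set.Ioo m x :=
        Filter.eventually_of_mem (Ioo_mem_nhdsLT hmx) fun _ hh => hh
      obtain ⟨s, hs1, hs2⟩ := (hev'.and hmem).exists
      have hqs : q s ≤ q x := hmax s ⟨hs2.1.le, hs2.2.le.trans hx.2⟩
      rw [slope_def_field] at hs1
      have hd : s - x < 0 := by linarith [hs2.2]
      have : 0 ≤ (q s - q x) / (s - x) :=
        div_nonneg_of_nonpos (by linarith) hd.le
      linarith
    have h2 : P * (y - x) = -(P * (x - y)) := by ring
    linarith [mul_nonneg hP (sub_nonneg.mpr h.le)]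
  · simp [h]
  · -- show P ≤ 0
    have hP : P ≤ 0 := by
      by_contra hP
      push_neg at hP
      have hev : ∀ᶠ s in 𝓝[≠] x, 0 < slope q x s := ht.eventually (Ioi_mem_nhds hP)
      have hle : 𝓝[>] x ≤ 𝓝[≠] x :=
        nhdsWithin_mono x fun s hs => Set.mem_compl_singleton_iff.mpr (ne_of_gt hs)
      have hev' : ∀ᶠ s in 𝓝[>] x, 0 < slope q x s := hev.filter_mono hle
      have hxM : x < M := lt_of_lt_of_le h hy.2
      have hmem : ∀ᶠ s in 𝓝[>] x, s ∈ Set.Ioo x M :=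
        Filter.eventually_of_mem (Ioo_mem_nhdsGT hxM) fun _ hh => hh
      obtain ⟨s, hs1, hs2⟩ := (hev'.and hmem).exists
      have hqs : q s ≤ q x := hmax s ⟨hx.1.trans hs2.1.le, hs2.2.le⟩
      rw [slope_def_field] at hs1
      have hd : 0 < s - x := by linarith [hs2.1]
      have : (q s - q x) / (s - x) ≤ 0 := div_nonpos_of_nonpos_of_nonneg (by linarith) hd.le
      linarith
    have h2 : P * (y - x) = -((-P) * (y - x)) := by ring
    linarith [mul_nonneg (neg_nonneg.mpr hP) (sub_nonneg.mpr h.le)]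

/-- The game has exactly one pure-strategy Nash equilibrium on the
box `∏_i [m, M]`. -/
theorem existsUnique_nash_equilibrium (N : ℕ) (hN : 1 ≤ N) (α β δ ϱ : ℝ) (hα : 0 < α) (hβ : 0 < β)
    (hϱ : 0 < ϱ) (hδ : 0 ≤ δ) (L c ψ φ K : Fin N → ℝ)
    (hL : ∀ i, 0 < L i) (hc : ∀ i, 0 < c i) (hψ : ∀ i, 0 < ψ i) (hφ : ∀ j, 0 < φ j)
    (hK : ∀ i, 0 ≤ K i)
    (γ : Fin N → Fin N → ℝ) (hγ : ∀ i j, γ i j ∈ Set.Icc (0 : ℝ) 1)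
    (ξ : ℝ) (hξ0 : 0 ≤ ξ) (hξ : ∀ j, ξ ≤ φ j) (ε0 : ℝ) 
    (m M : ℝ) (hm : 0 ≤ m) (hmM : m < M) :
    ∃! dstar : Fin N → ℝ, (∀ i, dstar i ∈ Set.Icc m M) ∧
      ∀ i : Fin N, ∀ y ∈ Set.Icc m M,
        utility N α β δ ϱ L c ψ φ K γ ξ ε0 i (Function.update dstar i y)
          ≤ utility N α β δ ϱ L c ψ φ K γ ξ ε0 i dstar := by
  have hNR : (0 : ℝ) < (N : ℝ) := by
    have : 0 < N := hN
    exact_mod_cast this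
  have hBpos : ∀ i, 0 < Bc N ψ φ γ ξ i := by
    intro i
    unfold Bc
    have hs : ∑ j ∈ Finset.univ.erase i, (ξ - φ j) * γ i j ≤ 0 :=
      Finset.sum_nonpos fun j _ =>
        mul_nonpos_of_nonpos_of_nonneg (by linarith [hξ j]) (hγ i j).1
    linarith [hψ i]
  set S : Set (Fin N → ℝ) := Set.univ.pi fun _ => Set.Icc m M with hS
  have hmemS : ∀ d : Fin N → ℝ, d ∈ S ↔ ∀ i, d i ∈ Set.Icc m M := by
    intro d; simp [hS, Pi.le_def, forall_and]
  have hposS : ∀ d : Fin N → ℝ, (∀ i, d i ∈ Set.Icc m M) → ∀ j, 0 < L j + d j :=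
    fun d hd j => by have := (hd j).1; linarith [hL j, hm]
  -- continuity of Phi on S
  have hcont : ContinuousOn (Phi N α β δ ϱ L c ψ φ γ ξ) S := by
    have h1 : ∀ j : Fin N, ContinuousOn (fun d : Fin N → ℝ => (L j + d j) ^ (-β)) S := by
      intro j
      apply ContinuousOn.rpow_const
      · exact (continuous_const.add (continuous_apply j)).continuousOn
      · intro x hx
        left
        have hx' := ((hmemS x).mp hx j).1
        have := hL j
        intro hzero
        nlinarith [hm]
    have hgqc : ContinuousOn (fun d => gq N α β δ ϱ L d) S := by
      unfold gq
      apply ContinuousOn.div_const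
      apply ContinuousOn.sub _ continuousOn_const
      apply ContinuousOn.mul continuousOn_const
      apply continuousOn_finset_sum
      intro j _
      exact (continuousOn_const.mul (h1 j)).sub continuousOn_const
    have hepsc : ContinuousOn (fun d => epsGlob N α β δ ϱ L d) S := by
      have := Real.continuous_exp.comp_continuousOn hgqc
      exact this
    have hlinc : ContinuousOn (fun d : Fin N → ℝ => ∑ j, c j / Bc N ψ φ γ ξ j * d j) S :=
      (continuous_finset_sum _ fun j _ =>
        (continuous_const.mul (continuous_apply j))).continuousOn
    exact (hepsc.neg).sub hlinc
  have hScomp : IsCompact S := isCompact_univ_pi fun _ => isCompact_Icc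
  have hSne : S.Nonempty := ⟨fun _ => m, (hmemS _).mpr fun i => ⟨le_refl m, hmM.le⟩⟩
  obtain ⟨dstar, hdS, hdmax⟩ := hScomp.exists_isMaxOn hSne hcont
  have hdIcc : ∀ i, dstar i ∈ Set.Icc m M := (hmemS dstar).mp hdS
  refine ⟨dstar, ⟨hdIcc, ?_⟩, ?_⟩
  · -- dstar is a Nash equilibrium
    intro i y hy
    apply (utility_le_iff (hBpos i) dstar y).mpr
    apply isMaxOn_iff.mp hdmax
    refine (hmemS _).mpr fun j => ?_
    rcases eq_or_ne j i with rfl | hji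
    · rwa [Function.update_self]
    · rw [Function.update_of_ne hji]; exact hdIcc j
  · -- uniqueness
    rintro e ⟨heIcc, heNE⟩
    by_contra hne
    have hne' : dstar ≠ e := fun h => hne h.symm
    have hPsign : ∀ j, Pc N α β δ ϱ L c ψ φ γ ξ e j * (dstar j - e j) ≤ 0 := by
      intro j
      have hq := hasDerivAt_phi_update (α := α) (β := β) (δ := δ) (c := c) (ψ := ψ) (φ := φ)
        (γ := γ) (ξ := ξ) hNR.ne' hϱ.ne' (d := e) (i := j) (hposS e heIcc j)
      apply deriv_mul_nonpos hq ?_ (heIcc j) (hdIcc j)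
      intro s hs
      have h := (utility_le_iff (hBpos j) e s).mp (heNE j s hs)
      simpa [Function.update_eq_self] using h
    have hstrict := phi_strict (δ := δ) (c := c) (ψ := ψ) (φ := φ) (γ := γ) (ξ := ξ)
      hNR hα hβ hϱ (hposS e heIcc) (hposS dstar hdIcc) hne'
    have hsum : ∑ j, Pc N α β δ ϱ L c ψ φ γ ξ e j * (dstar j - e j) ≤ 0 :=
      Finset.sum_nonpos fun j _ => hPsign j
    have hmax_e : Phi N α β δ ϱ L c ψ φ γ ξ e ≤ Phi N α β δ ϱ L c ψ φ γ ξ dstar :=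
      isMaxOn_iff.mp hdmax e ((hmemS e).mpr heIcc)
    linarith
end

section
/- A profile d* ∈ ∏_{i<N} [m, M] is a global minimizer of the potential F over the box ∏_{i<N} [m, M] if and only if for every organization i, writing G_i = −(α·β/(N·ϱ))·(L_i + d*_i)^(−β−1)·exp((A_1 − 1)/ϱ) − c_i/z_i with A_1 = (1/N)·Σ_{j<N} (α·(L_j + d*_j)^(−β) − δ), one of the following holds: (1) d*_i = m and G_i ≥ 0; (2) d*_i = M and G_i ≤ 0; (3) G_i = 0. -/
open Real Finset

section Aux

open Filter Topology

/-- Convexity of `x ↦ x ^ (-β)` on `(0, ∞)`. -/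
lemma convexOn_rpow_neg {β : ℝ} (hβ : 0 < β) :
    ConvexOn ℝ (Set.Ioi (0:ℝ)) (fun x : ℝ => x ^ (-β)) := by
  have hi : interior (Set.Ioi (0:ℝ)) = Set.Ioi 0 := interior_Ioi
  refine convexOn_of_hasDerivWithinAt2_nonneg (convex_Ioi 0)
    (f' := fun x => -β * x ^ (-β - 1))
    (f'' := fun x => -β * ((-β - 1) * x ^ (-β - 1 - 1))) ?_ ?_ ?_ ?_
  · intro x hx
    exact (Real.continuousAt_rpow_const x (-β) (Or.inl (ne_of_gt hx))).continuousWithinAt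
  · intro x hx
    rw [hi] at hx ⊢
    exact (Real.hasDerivAt_rpow_const (p := -β) (Or.inl (ne_of_gt hx))).hasDerivWithinAt
  · intro x hx
    rw [hi] at hx ⊢
    exact ((Real.hasDerivAt_rpow_const (p := -β - 1)
      (Or.inl (ne_of_gt hx))).const_mul (-β)).hasDerivWithinAt
  · intro x hx
    rw [hi] at hx
    have hp : (0:ℝ) < x ^ (-β - 1 - 1) := Real.rpow_pos_of_pos hx _
    show (0:ℝ) ≤ -β * ((-β - 1) * x ^ (-β - 1 - 1))
    nlinarith [mul_pos hβ hp, mul_pos (mul_pos hβ hβ) hp]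

/-- First-order necessary condition (right side). -/
lemma deriv_nonneg_right {φ : ℝ → ℝ} {g t0 b : ℝ} (hd : HasDerivAt φ g t0) (hb : t0 < b)
    (hmin : ∀ t, t0 < t → t < b → φ t0 ≤ φ t) : 0 ≤ g := by
  have h2 : Tendsto (slope φ t0) (𝓝[>] t0) (𝓝 g) :=
    (hasDerivAt_iff_tendsto_slope.1 hd).mono_left
      (nhdsWithin_mono _ fun x hx => ne_of_gt hx)
  refine ge_of_tendsto h2 ?_
  filter_upwards [Ioo_mem_nhdsGT hb] with t ht
  rw [slope_def_field]
  exact div_nonneg (sub_nonneg.2 (hmin t ht.1 ht.2)) (sub_nonneg.2 ht.1.le)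

/-- First-order necessary condition (left side). -/
lemma deriv_nonpos_left {φ : ℝ → ℝ} {g t0 a : ℝ} (hd : HasDerivAt φ g t0) (ha : a < t0)
    (hmin : ∀ t, a < t → t < t0 → φ t0 ≤ φ t) : g ≤ 0 := by
  have h2 : Tendsto (slope φ t0) (𝓝[<] t0) (𝓝 g) :=
    (hasDerivAt_iff_tendsto_slope.1 hd).mono_left
      (nhdsWithin_mono _ fun x hx => ne_of_lt hx)
  refine le_of_tendsto h2 ?_
  filter_upwards [Ioo_mem_nhdsLT ha] with t ht
  rw [slope_def_field]
  exact div_nonpos_of_nonneg_of_nonpos (sub_nonneg.2 (hmin t ht.1 ht.2))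
    (sub_nonpos.2 ht.2.le)

/-- For a convex function on `[0,1]`, the derivative at `0` is at most the total increment. -/
lemma deriv_le_sub_of_convexOn {φ : ℝ → ℝ} {g : ℝ} (hφ : ConvexOn ℝ (Set.Icc 0 1) φ)
    (hd : HasDerivAt φ g 0) : g ≤ φ 1 - φ 0 := by
  have h2 : Tendsto (slope φ 0) (𝓝[>] 0) (𝓝 g) :=
    (hasDerivAt_iff_tendsto_slope.1 hd).mono_left
      (nhdsWithin_mono _ fun x hx => ne_of_gt hx)
  refine le_of_tendsto h2 ?_
  filter_upwards [Ioo_mem_nhdsGT one_pos] with t ht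
  rw [slope_def_field]
  have hc := hφ.2 (Set.left_mem_Icc.2 zero_le_one) (Set.right_mem_Icc.2 zero_le_one)
    (by linarith [ht.2] : (0:ℝ) ≤ 1 - t) ht.1.le (by ring)
  simp only [smul_eq_mul, mul_zero, mul_one, zero_add] at hc
  rw [sub_zero, div_le_iff₀ ht.1]
  nlinarith [hc]

lemma convexOn_finset_sum {ι : Type*} (t : Finset ι) {s : Set ℝ} (hs : Convex ℝ s)
    {f : ι → ℝ → ℝ} (h : ∀ i ∈ t, ConvexOn ℝ s (f i)) :
    ConvexOn ℝ s (fun x => ∑ i ∈ t, f i x) := by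
  induction t using Finset.cons_induction with
  | empty => simpa using convexOn_const 0 hs
  | cons i t hi ih =>
      simp only [Finset.sum_cons]
      exact (h i (Finset.mem_cons_self i t)).add (ih fun j hj => h j (Finset.mem_cons_of_mem hj))

lemma convexOn_exp_comp {s : Set ℝ} {q : ℝ → ℝ} (hq : ConvexOn ℝ s q) :
    ConvexOn ℝ s (fun t => Real.exp (q t)) := by
  refine ⟨hq.1, fun x hx y hy a b ha hb hab => ?_⟩
  calc Real.exp (q (a • x + b • y)) ≤ Real.exp (a • q x + b • q y) :=
        Real.exp_le_exp.2 (hq.2 hx hy ha hb hab)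
    _ ≤ a • Real.exp (q x) + b • Real.exp (q y) :=
        convexOn_exp.2 (Set.mem_univ _) (Set.mem_univ _) ha hb hab

lemma convexOn_affine {s : Set ℝ} (hs : Convex ℝ s) (C K : ℝ) :
    ConvexOn ℝ s (fun t => C + t * K) := by
  refine ⟨hs, fun x _ y _ a b ha hb hab => ?_⟩
  simp only [smul_eq_mul]
  exact le_of_eq (by linear_combination (-C) * hab)

lemma convexOn_rpow_neg_affine {β : ℝ} (hβ : 0 < β) (a b v : ℝ)
    (h0 : 0 < a + b) (h1 : 0 < a + b + v) :
    ConvexOn ℝ (Set.Icc (0:ℝ) 1) (fun t => (a + (b + t * v)) ^ (-β)) := by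
  have hpos : ∀ u ∈ Set.Icc (0:ℝ) 1, 0 < a + (b + u * v) := by
    intro u hu
    rcases le_or_gt 0 v with hv | hv
    · nlinarith [mul_nonneg hu.1 hv]
    · nlinarith [mul_nonneg (sub_nonneg.2 hu.2) (neg_nonneg.2 hv.le)]
  refine ⟨convex_Icc _ _, fun s hs t ht wa wb hwa hwb hw => ?_⟩
  have hkey := (convexOn_rpow_neg hβ).2 (Set.mem_Ioi.2 (hpos s hs)) (Set.mem_Ioi.2 (hpos t ht))
    hwa hwb hw
  simp only [smul_eq_mul] at hkey ⊢
  have harg : a + (b + (wa * s + wb * t) * v)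
      = wa * (a + (b + s * v)) + wb * (a + (b + t * v)) := by
    linear_combination (a + b) * hw.symm
  rw [harg]
  exact hkey

/-- Derivative of the potential along the segment `t ↦ x + t • v`, at `t = 0`. -/
lemma hasDerivAt_pot (N : ℕ) (α β δ ϱ : ℝ)
    (L c z x v : Fin N → ℝ) (hx : ∀ j, 0 < L j + x j) :
    HasDerivAt (fun t => potential N α β δ ϱ L c z (fun j => x j + t * v j))
      (∑ j, ((-(α * β / ((N : ℝ) * ϱ)) * (L j + x j) ^ (-β - 1) *
          Real.exp (((1 / (N : ℝ)) * ∑ k, (α * (L k + x k) ^ (-β) - δ) - 1) / ϱ)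
          - c j / z j) * v j)) 0 := by
  have hsum : HasDerivAt
      (fun t : ℝ => ∑ j, (α * (L j + (x j + t * v j)) ^ (-β) - δ))
      (∑ j, α * (v j * -β * (L j + (x j + 0 * v j)) ^ (-β - 1))) 0 := by
    refine HasDerivAt.fun_sum fun j _ => ?_
    have h1 : HasDerivAt (fun t : ℝ => L j + (x j + t * v j)) (v j) 0 :=
      ((hasDerivAt_mul_const (v j)).const_add (x j)).const_add (L j)
    have h2 := h1.rpow_const (p := -β) (Or.inl (by simpa using (hx j).ne'))
    exact (h2.const_mul α).sub_const δ
  have hu := ((hsum.const_mul (1 / (N:ℝ))).sub_const 1).div_const ϱ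
  have hexp := hu.exp
  have hw : HasDerivAt (fun t : ℝ => ∑ i, (c i / z i) * (x i + t * v i))
      (∑ i, (c i / z i) * v i) 0 :=
    HasDerivAt.fun_sum fun i _ => ((hasDerivAt_mul_const (v i)).const_add (x i)).const_mul _
  have H := hexp.fun_sub hw
  simp only [zero_mul, add_zero] at H
  simp only [potential, epsGlob]
  convert H using 1
  · rfl
  · rfl
  simp only [sub_mul, Finset.sum_sub_distrib]
  congr 1
  rw [mul_comm (Real.exp _), div_mul_eq_mul_div, Finset.mul_sum, Finset.sum_div,
    Finset.sum_mul]
  exact Finset.sum_congr rfl fun j _ => by ring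

/-- Convexity of the potential along the segment `t ↦ x + t • v` on `[0,1]`. -/
lemma convexOn_pot (N : ℕ) (α β δ ϱ : ℝ) (hα : 0 ≤ α) (hβ : 0 < β) (hϱ : 0 < ϱ)
    (L c z x v : Fin N → ℝ) (hx : ∀ j, 0 < L j + x j) (hxv : ∀ j, 0 < L j + x j + v j) :
    ConvexOn ℝ (Set.Icc (0:ℝ) 1)
      (fun t => potential N α β δ ϱ L c z (fun j => x j + t * v j)) := by
  have hIcc : Convex ℝ (Set.Icc (0:ℝ) 1) := convex_Icc 0 1
  have hS : ConvexOn ℝ (Set.Icc (0:ℝ) 1)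
      (fun t => ∑ j, (α * (L j + (x j + t * v j)) ^ (-β) - δ)) := by
    refine convexOn_finset_sum _ hIcc fun j _ => ?_
    have h1 := ((convexOn_rpow_neg_affine hβ (L j) (x j) (v j) (hx j) (hxv j)).smul hα).add_const
      (-δ)
    simpa [smul_eq_mul, sub_eq_add_neg, Pi.add_def] using h1
  have hq := ((hS.smul (show (0:ℝ) ≤ 1 / (N:ℝ) by positivity)).add_const (-1)).smul
    (show (0:ℝ) ≤ 1 / ϱ by positivity)
  have hq' : ConvexOn ℝ (Set.Icc (0:ℝ) 1)
      (fun t => (1 / (N:ℝ) * ∑ j, (α * (L j + (x j + t * v j)) ^ (-β) - δ) - 1) / ϱ) := by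
    have heq : (fun t => (1 / (N:ℝ) * ∑ j, (α * (L j + (x j + t * v j)) ^ (-β) - δ) - 1) / ϱ)
        = fun t => (1 / ϱ) * ((1 / (N:ℝ)) * (∑ j, (α * (L j + (x j + t * v j)) ^ (-β) - δ))
            + (-1)) := by
      funext t; ring
    rw [heq]
    simpa [smul_eq_mul] using hq
  have hE := convexOn_exp_comp hq'
  have hLin : ConvexOn ℝ (Set.Icc (0:ℝ) 1)
      (fun t => -(∑ i, c i / z i * (x i + t * v i))) := by
    have h2 := convexOn_affine hIcc (-(∑ i, c i / z i * x i)) (-(∑ i, c i / z i * v i))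
    have heq : (fun t => -(∑ i, c i / z i * (x i + t * v i)))
        = fun t => -(∑ i, c i / z i * x i) + t * -(∑ i, c i / z i * v i) := by
      funext t
      have h3 : ∑ i, c i / z i * (x i + t * v i)
          = ∑ i, c i / z i * x i + t * ∑ i, c i / z i * v i := by
        rw [Finset.mul_sum, ← Finset.sum_add_distrib]
        exact Finset.sum_congr rfl fun i _ => by ring
      rw [h3]; ring
    rw [heq]; exact h2
  have hfin := hE.add hLin
  simp only [potential, epsGlob]
  simpa [sub_eq_add_neg, Pi.add_def] using hfin

end Aux

/-- A profile `d*` in the box is a global minimizer of the potential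
`F` over `∏_i [m, M]` iff for every `i`, with
`G_i = −(α·β/(N·ϱ))·(L_i + d*_i)^(−β−1)·exp((A_1 − 1)/ϱ) − c_i/z_i`, one of the
following holds: `d*_i = m` and `G_i ≥ 0`; `d*_i = M` and `G_i ≤ 0`; or `G_i = 0`. -/
theorem potential_minimizer_iff_kkt (N : ℕ) (hN : 1 ≤ N) (α β δ ϱ : ℝ) (hα : 0 < α) (hβ : 0 < β)
    (hϱ : 0 < ϱ) (hδ : 0 ≤ δ) (L c z : Fin N → ℝ)
    (hL : ∀ i, 0 < L i) (hc : ∀ i, 0 < c i) (hz : ∀ i, z i < 0)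
    (m M : ℝ) (hm : 0 ≤ m) (hmM : m < M)
    (dstar : Fin N → ℝ) (hdstar : ∀ i, dstar i ∈ Set.Icc m M) :
    (∀ d : Fin N → ℝ, (∀ i, d i ∈ Set.Icc m M) →
        potential N α β δ ϱ L c z dstar ≤ potential N α β δ ϱ L c z d)
      ↔ (∀ i : Fin N,
          (dstar i = m ∧
              0 ≤ -(α * β / ((N : ℝ) * ϱ)) * (L i + dstar i) ^ (-β - 1) *
                    Real.exp (((1 / (N : ℝ)) *
                        ∑ j, (α * (L j + dstar j) ^ (-β) - δ) - 1) / ϱ)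
                  - c i / z i)
          ∨ (dstar i = M ∧
              -(α * β / ((N : ℝ) * ϱ)) * (L i + dstar i) ^ (-β - 1) *
                    Real.exp (((1 / (N : ℝ)) *
                        ∑ j, (α * (L j + dstar j) ^ (-β) - δ) - 1) / ϱ)
                  - c i / z i ≤ 0)
          ∨ (-(α * β / ((N : ℝ) * ϱ)) * (L i + dstar i) ^ (-β - 1) *
                  Real.exp (((1 / (N : ℝ)) *
                      ∑ j, (α * (L j + dstar j) ^ (-β) - δ) - 1) / ϱ)
                - c i / z i = 0)) := by
  have hpos : ∀ (d : Fin N → ℝ), (∀ i, d i ∈ Set.Icc m M) → ∀ j, 0 < L j + d j := by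
    intro d hd j
    have h1 := (hd j).1
    have h2 := hL j
    linarith
  have hds := hpos dstar hdstar
  constructor
  · -- minimizer ⇒ KKT
    intro hmin i
    have hD0 := hasDerivAt_pot N α β δ ϱ L c z dstar (Pi.single i (1:ℝ)) hds
    have hsum1 : (∑ j, ((-(α * β / ((N : ℝ) * ϱ)) * (L j + dstar j) ^ (-β - 1) *
          Real.exp (((1 / (N : ℝ)) * ∑ k, (α * (L k + dstar k) ^ (-β) - δ) - 1) / ϱ)
          - c j / z j) * (Pi.single i (1:ℝ) : Fin N → ℝ) j))
        = -(α * β / ((N : ℝ) * ϱ)) * (L i + dstar i) ^ (-β - 1) *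
            Real.exp (((1 / (N : ℝ)) * ∑ j, (α * (L j + dstar j) ^ (-β) - δ) - 1) / ϱ)
            - c i / z i := by
      rw [Finset.sum_eq_single_of_mem i (Finset.mem_univ i)]
      · rw [Pi.single_eq_same, mul_one]
      · intro b _ hb
        rw [Pi.single_eq_of_ne hb, mul_zero]
    rw [hsum1] at hD0
    have hminf : ∀ t, m - dstar i ≤ t → t ≤ M - dstar i →
        (fun t : ℝ => potential N α β δ ϱ L c z
            (fun j => dstar j + t * (Pi.single i (1:ℝ) : Fin N → ℝ) j)) 0
          ≤ (fun t : ℝ => potential N α β δ ϱ L c z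
            (fun j => dstar j + t * (Pi.single i (1:ℝ) : Fin N → ℝ) j)) t := by
      intro t h1 h2
      simp only
      have h0 : (fun j : Fin N => dstar j + (0:ℝ) * (Pi.single i (1:ℝ) : Fin N → ℝ) j) = dstar := by
        funext j; ring
      rw [h0]
      refine hmin _ fun j => ?_
      rcases eq_or_ne j i with rfl | hne
      · rw [Pi.single_eq_same, mul_one]
        exact ⟨by linarith, by linarith⟩
      · rw [Pi.single_eq_of_ne hne, mul_zero, add_zero]
        exact hdstar j
    by_cases hM1 : dstar i = M
    · right; left
      refine ⟨hM1, deriv_nonpos_left hD0 (show m - dstar i < 0 by rw [hM1]; linarith) ?_⟩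
      intro t ht1 ht2
      exact hminf t ht1.le (by rw [hM1]; linarith)
    by_cases hm1 : dstar i = m
    · left
      refine ⟨hm1, deriv_nonneg_right hD0 (show (0:ℝ) < M - dstar i by
        have := (hdstar i).2; rcases lt_or_eq_of_le this with h | h
        · linarith
        · exact absurd h hM1) ?_⟩
      intro t ht1 ht2
      exact hminf t (by rw [hm1]; linarith) ht2.le
    · right; right
      have hlo : m < dstar i := lt_of_le_of_ne (hdstar i).1 (Ne.symm hm1)
      have hhi : dstar i < M := lt_of_le_of_ne (hdstar i).2 hM1
      have a1 := deriv_nonneg_right hD0 (show (0:ℝ) < M - dstar i by linarith)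
        (fun t ht1 ht2 => hminf t (by linarith) ht2.le)
      have a2 := deriv_nonpos_left hD0 (show m - dstar i < 0 by linarith)
        (fun t ht1 ht2 => hminf t ht1.le (by linarith))
      linarith
  · -- KKT ⇒ minimizer
    intro hkkt d hd
    have hD0 := hasDerivAt_pot N α β δ ϱ L c z dstar (fun j => d j - dstar j) hds
    have hconv := convexOn_pot N α β δ ϱ hα.le hβ hϱ L c z dstar (fun j => d j - dstar j) hds
      (fun j => by
        have := hpos d hd j
        show 0 < L j + dstar j + (d j - dstar j)
        linarith)
    beta_reduce at hD0 hconv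
    have hle := deriv_le_sub_of_convexOn hconv hD0
    have h0 : (fun j => dstar j + (0:ℝ) * (d j - dstar j)) = dstar := by funext j; ring
    have h1 : (fun j => dstar j + (1:ℝ) * (d j - dstar j)) = d := by funext j; ring
    simp only [h0, h1] at hle
    have hg : 0 ≤ ∑ j, ((-(α * β / ((N : ℝ) * ϱ)) * (L j + dstar j) ^ (-β - 1) *
        Real.exp (((1 / (N : ℝ)) * ∑ k, (α * (L k + dstar k) ^ (-β) - δ) - 1) / ϱ)
        - c j / z j) * (d j - dstar j)) := by
      refine Finset.sum_nonneg fun j _ => ?_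
      rcases hkkt j with ⟨he, hge⟩ | ⟨he, hle'⟩ | he
      · exact mul_nonneg hge (sub_nonneg.2 (he ▸ (hd j).1))
      · have hsub : d j - dstar j ≤ 0 := sub_nonpos.2 (he ▸ (hd j).2)
        have := mul_nonneg (neg_nonneg.2 hle') (neg_nonneg.2 hsub)
        rwa [neg_mul_neg] at this
      · rw [he, zero_mul]
    linarith
end

section
/- Let d* ∈ ∏_{i<N} [m, M] be a global minimizer of the potential F over the box ∏_{i<N} [m, M], and suppose m < d*_i < M for some organization i. Then d*_i = (−A_2·N·ϱ/(α·β)·exp(−(A_1 − 1)/ϱ))^(−1/(β+1)) − L_i, where A_1 = (1/N)·Σ_{j<N} (α·(L_j + d*_j)^(−β) − δ) and A_2 = c_i/z_i (note A_2 < 0, so the base of the power is positive). -/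
open Real Finset

/-- If `d*` globally minimizes the potential `F` over the box and
`m < d*_i < M`, then
`d*_i = (−A_2·N·ϱ/(α·β)·exp(−(A_1 − 1)/ϱ))^(−1/(β+1)) − L_i`, where
`A_1 = (1/N)·Σ_j (α·(L_j + d*_j)^(−β) − δ)` and `A_2 = c_i/z_i`. -/
theorem interior_minimizer_closed_form (N : ℕ) (hN : 1 ≤ N) (α β δ ϱ : ℝ) (hα : 0 < α) (hβ : 0 < β)
    (hϱ : 0 < ϱ) (hδ : 0 ≤ δ) (L c z : Fin N → ℝ)
    (hL : ∀ i, 0 < L i) (hc : ∀ i, 0 < c i) (hz : ∀ i, z i < 0)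
    (m M : ℝ) (hm : 0 ≤ m) (hmM : m < M)
    (dstar : Fin N → ℝ) (hdstar : ∀ i, dstar i ∈ Set.Icc m M)
    (hmin : ∀ d : Fin N → ℝ, (∀ i, d i ∈ Set.Icc m M) →
        potential N α β δ ϱ L c z dstar ≤ potential N α β δ ϱ L c z d)
    (i : Fin N) (hlo : m < dstar i) (hhi : dstar i < M) :
    dstar i
      = (-(c i / z i) * (N : ℝ) * ϱ / (α * β) *
            Real.exp (-((1 / (N : ℝ)) *
                ∑ j, (α * (L j + dstar j) ^ (-β) - δ) - 1) / ϱ)) ^ (-1 / (β + 1))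
        - L i := by
  have hNpos : (0 : ℝ) < N := by exact_mod_cast hN
  set x : ℝ := L i + dstar i with hxdef
  have hx : 0 < x := add_pos_of_pos_of_nonneg (hL i) (hm.trans (hdstar i).1)
  set S : ℝ := ∑ j ∈ Finset.univ.erase i, (α * (L j + dstar j) ^ (-β) - δ) with hS
  set T : ℝ := ∑ j ∈ Finset.univ.erase i, (c j / z j) * dstar j with hT
  set h : ℝ → ℝ := fun t =>
    Real.exp (((1 / (N : ℝ)) * ((α * (L i + t) ^ (-β) - δ) + S) - 1) / ϱ)
      - (c i / z i) * t with hh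
  -- potential of an update equals h t - T
  have hpot : ∀ t : ℝ, potential N α β δ ϱ L c z (Function.update dstar i t) = h t - T := by
    intro t
    have hmem : i ∈ Finset.univ := Finset.mem_univ i
    have hsum1 : ∑ j, (α * (L j + Function.update dstar i t j) ^ (-β) - δ)
        = (α * (L i + t) ^ (-β) - δ) + S := by
      rw [← Finset.add_sum_erase _ _ hmem]
      congr 1
      · simp
      · exact Finset.sum_congr rfl fun j hj => by
          rw [Function.update_of_ne (Finset.ne_of_mem_erase hj)]
    have hsum2 : ∑ j, (c j / z j) * Function.update dstar i t j
        = (c i / z i) * t + T := by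
      rw [← Finset.add_sum_erase _ _ hmem]
      congr 1
      · simp
      · exact Finset.sum_congr rfl fun j hj => by
          rw [Function.update_of_ne (Finset.ne_of_mem_erase hj)]
    simp only [potential, epsGlob, hsum1, hsum2, hh]
    ring
  -- h has a local min at dstar i
  have hloc : IsLocalMin h (dstar i) := by
    have hmemnhds : Set.Ioo m M ∈ nhds (dstar i) := isOpen_Ioo.mem_nhds ⟨hlo, hhi⟩
    filter_upwards [hmemnhds] with t ht
    have hbox : ∀ j, Function.update dstar i t j ∈ Set.Icc m M := by
      intro j
      rcases eq_or_ne j i with rfl | hji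
      · simpa using Set.mem_Icc_of_Ioo ht
      · rw [Function.update_of_ne hji]; exact hdstar j
    have := hmin _ hbox
    rw [hpot t] at this
    have h0 : potential N α β δ ϱ L c z dstar = h (dstar i) - T := by
      have := hpot (dstar i)
      rwa [Function.update_eq_self] at this
    rw [h0] at this
    linarith
  -- derivative of h
  have hxne : L i + dstar i ≠ 0 := ne_of_gt hx
  have hder : HasDerivAt h
      (Real.exp (((1 / (N : ℝ)) * ((α * x ^ (-β) - δ) + S) - 1) / ϱ) *
          (((1 / (N : ℝ)) * (α * (1 * -β * x ^ (-β - 1)))) / ϱ)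
        - c i / z i) (dstar i) := by
    have h1 : HasDerivAt (fun t : ℝ => L i + t) 1 (dstar i) :=
      (hasDerivAt_id (dstar i)).const_add (L i)
    have h2 : HasDerivAt (fun t : ℝ => (L i + t) ^ (-β))
        (1 * -β * x ^ (-β - 1)) (dstar i) :=
      h1.rpow_const (Or.inl hxne)
    have h3 : HasDerivAt (fun t : ℝ =>
        ((1 / (N : ℝ)) * ((α * (L i + t) ^ (-β) - δ) + S) - 1) / ϱ)
        (((1 / (N : ℝ)) * (α * (1 * -β * x ^ (-β - 1)))) / ϱ) (dstar i) :=
      ((((h2.const_mul α).sub_const δ).add_const S).const_mul (1 / (N : ℝ))).sub_const 1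
        |>.div_const ϱ
    have h4 := h3.exp
    have h5 : HasDerivAt (fun t : ℝ => (c i / z i) * t) (c i / z i) (dstar i) := by
      simpa using (hasDerivAt_id (dstar i)).const_mul (c i / z i)
    exact h4.sub h5
  have hderiv0 := hloc.deriv_eq_zero
  rw [hder.deriv] at hderiv0
  -- the full sum equals head term plus S
  have hsum : ∑ j, (α * (L j + dstar j) ^ (-β) - δ) = (α * x ^ (-β) - δ) + S := by
    rw [← Finset.add_sum_erase _ _ (Finset.mem_univ i)]
  set A1 : ℝ := (1 / (N : ℝ)) * ((α * x ^ (-β) - δ) + S) with hA1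
  set E : ℝ := Real.exp ((A1 - 1) / ϱ) with hE
  have hEpos : 0 < E := Real.exp_pos _
  -- solve for c i / z i
  have hcz : c i / z i = E * ((1 / (N : ℝ)) * (α * -β * x ^ (-β - 1))) / ϱ := by
    rw [hE, hA1]
    linear_combination -hderiv0
  -- show base equals x ^ (-(β+1))
  have hEinv : Real.exp (-(A1 - 1) / ϱ) = E⁻¹ := by
    rw [hE, ← Real.exp_neg]; ring_nf
  have hbase : -(c i / z i) * (N : ℝ) * ϱ / (α * β) * Real.exp (-(A1 - 1) / ϱ)
      = x ^ (-β - 1) := by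
    rw [hcz, hEinv]
    field_simp
  have hβ1 : β + 1 ≠ 0 := by positivity
  have hxval : (x ^ (-β - 1)) ^ (-1 / (β + 1)) = x := by
    have hexp : (-β - 1) * (-1 / (β + 1)) = 1 := by field_simp; ring
    rw [← Real.rpow_mul hx.le, hexp, Real.rpow_one]
  rw [hsum, hbase, hxval]
  rw [hxdef]; ring
end

section
/- Fix a profile d ∈ ℝ^N with d_j > −L_j for all j, and define the N×N matrix H(d) with entries H_{jk}(d) = ε(d)·( (1/(N·ϱ))²·h'_j·h'_k + [j = k]·(1/(N·ϱ))·h''_j ), where h'_j = −α·β·(L_j + d_j)^(−β−1) and h''_j = α·β·(β+1)·(L_j + d_j)^(−β−2). Then H(d) (the Hessian of the potential F at d) is positive definite: for every nonzero v ∈ ℝ^N, Σ_{j,k} v_j·H_{jk}(d)·v_k > 0. -/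
open Real Finset

/-- The Hessian `H(d)` of the potential, with entries
`H_jk(d) = ε(d)·((1/(N·ϱ))²·h'_j·h'_k + [j = k]·(1/(N·ϱ))·h''_j)` where
`h'_j = −α·β·(L_j + d_j)^(−β−1)` and `h''_j = α·β·(β+1)·(L_j + d_j)^(−β−2)`, is
positive definite. -/
theorem hessian_posDef (N : ℕ) (hN : 1 ≤ N) (α β δ ϱ : ℝ) (hα : 0 < α) (hβ : 0 < β)
    (hϱ : 0 < ϱ) (hδ : 0 ≤ δ) (L : Fin N → ℝ) (hL : ∀ i, 0 < L i)
    (d : Fin N → ℝ) (hd : ∀ j, -(L j) < d j)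
    (v : Fin N → ℝ) (hv : v ≠ 0) :
    0 < ∑ j, ∑ k, v j *
        (epsGlob N α β δ ϱ L d *
          ((1 / ((N : ℝ) * ϱ)) ^ 2 * (-(α * β) * (L j + d j) ^ (-β - 1)) *
              (-(α * β) * (L k + d k) ^ (-β - 1))
            + (if j = k then (1 : ℝ) else 0) * (1 / ((N : ℝ) * ϱ)) *
              (α * β * (β + 1) * (L j + d j) ^ (-β - 2)))) * v k := by
  set E := epsGlob N α β δ ϱ L d with hE
  have hEpos : 0 < E := Real.exp_pos _
  set c : ℝ := 1 / ((N : ℝ) * ϱ) with hc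
  have hNpos : (0 : ℝ) < N := by exact_mod_cast Nat.lt_of_lt_of_le Nat.zero_lt_one hN
  have hcpos : 0 < c := by positivity
  set a : Fin N → ℝ := fun j => -(α * β) * (L j + d j) ^ (-β - 1) with ha
  set b : Fin N → ℝ := fun j => α * β * (β + 1) * (L j + d j) ^ (-β - 2) with hb
  have hx : ∀ j, 0 < L j + d j := fun j => by linarith [hd j]
  have hbpos : ∀ j, 0 < b j := fun j => by
    have := Real.rpow_pos_of_pos (hx j) (-β - 2)
    have : 0 < α * β * (β + 1) * (L j + d j) ^ (-β - 2) := by positivity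
    simpa [hb] using this
  have key : (∑ j, ∑ k, v j * (E * (c ^ 2 * a j * a k
        + (if j = k then (1 : ℝ) else 0) * c * b j)) * v k)
      = E * (c ^ 2 * (∑ j, v j * a j) ^ 2 + c * ∑ j, v j ^ 2 * b j) := by
    have h1 : ∀ j, (∑ k, v j * (E * (c ^ 2 * a j * a k
          + (if j = k then (1 : ℝ) else 0) * c * b j)) * v k)
        = E * c ^ 2 * (v j * a j) * (∑ k, v k * a k) + E * c * (v j ^ 2 * b j) := by
      intro j
      rw [Finset.mul_sum]
      have : ∀ k, v j * (E * (c ^ 2 * a j * a k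
            + (if j = k then (1 : ℝ) else 0) * c * b j)) * v k
          = E * c ^ 2 * (v j * a j) * (v k * a k)
            + (if j = k then E * c * (v j * b j) * v k else 0) := by
        intro k
        by_cases h : j = k <;> simp [h] <;> ring
      rw [Finset.sum_congr rfl (fun k _ => this k), Finset.sum_add_distrib,
        Finset.sum_ite_eq (Finset.univ) j (fun k => E * c * (v j * b j) * v k)]
      simp [Finset.mul_sum]
      ring
    rw [Finset.sum_congr rfl (fun j _ => h1 j), Finset.sum_add_distrib, ← Finset.sum_mul,
      ← Finset.mul_sum, ← Finset.mul_sum]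
    ring
  rw [key]
  have hsum : 0 < ∑ j, v j ^ 2 * b j := by
    obtain ⟨i, hi⟩ : ∃ i, v i ≠ 0 := Function.ne_iff.mp hv
    apply Finset.sum_pos'
    · intro j _
      have := (hbpos j).le
      positivity
    · exact ⟨i, Finset.mem_univ i, by have := hbpos i; positivity⟩
  have h1 : 0 ≤ c ^ 2 * (∑ j, v j * a j) ^ 2 := by positivity
  have h2 : 0 < c * ∑ j, v j ^ 2 * b j := by positivity
  positivity
end
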